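/- arXiv:2601.10670 — 4 statements merged into one kernel-verified Lean document; each statement's English description precedes it below -/
import Mathlib

section
/- Let ℓ ≥ 1. Every matrix A = [[x, π^{i+1}βy],[π^i y, x]] ∈ GU₂(𝔬_ℓ) with 0 ≤ i ≤ ℓ−1, β ∈ 𝔬_ℓ, x ∈ 𝔬_ℓ^× and y ∈ 𝔒_ℓ^× satisfying x² + π^{2i+1}β·y·y° = 1 = x² − π^{2i+1}β·y² and π^i(x·y° + x°·y) = 0 is real in GU₂(𝔬_ℓ) but is not strongly real: no h ∈ GU₂(𝔬_ℓ) with h² = 1 satisfies h A h⁻¹ = A⁻¹. -/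
open Matrix

/-- The antidiagonal permutation matrix `W`. -/
def Wmat (OO : Type) [CommRing OO] : Matrix (Fin 2) (Fin 2) OO := !![0, 1; 1, 0]

lemma Wmat_det_isUnit (OO : Type) [CommRing OO] : IsUnit (Wmat OO).det := by
  have : (Wmat OO).det = -1 := by simp [Wmat, Matrix.det_fin_two_of]
  rw [this]; exact isUnit_one.neg

/-- `A* = W (A°)ᵀ W⁻¹`, where `°` is applied entrywise. -/
noncomputable def mstar {OO : Type} [CommRing OO] (c : OO →+* OO)
    (M : Matrix (Fin 2) (Fin 2) OO) : Matrix (Fin 2) (Fin 2) OO :=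
  Wmat OO * (M.map c)ᵀ * (Wmat OO)⁻¹

lemma mstar_mul {OO : Type} [CommRing OO] (c : OO →+* OO)
    (M N : Matrix (Fin 2) (Fin 2) OO) :
    mstar c (M * N) = mstar c N * mstar c M := by
  unfold mstar
  rw [Matrix.map_mul, Matrix.transpose_mul]
  simp only [mul_assoc]
  rw [Matrix.nonsing_inv_mul_cancel_left _ _ (Wmat_det_isUnit OO)]

lemma mstar_one {OO : Type} [CommRing OO] (c : OO →+* OO) :
    mstar c (1 : Matrix (Fin 2) (Fin 2) OO) = 1 := by
  unfold mstar
  rw [Matrix.map_one c c.map_zero c.map_one, Matrix.transpose_one, mul_one,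
    Matrix.mul_nonsing_inv _ (Wmat_det_isUnit OO)]

lemma gu_one {OO : Type} [CommRing OO] (c : OO →+* OO) :
    mstar c ((1 : GL (Fin 2) OO) : Matrix (Fin 2) (Fin 2) OO) *
      ((1 : GL (Fin 2) OO) : Matrix (Fin 2) (Fin 2) OO) = 1 := by
  rw [Units.val_one, mstar_one, one_mul]

lemma gu_mul {OO : Type} [CommRing OO] (c : OO →+* OO) (a b : GL (Fin 2) OO)
    (ha : mstar c ↑a * (↑a : Matrix (Fin 2) (Fin 2) OO) = 1)
    (hb : mstar c ↑b * (↑b : Matrix (Fin 2) (Fin 2) OO) = 1) :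
    mstar c (↑(a * b)) * (↑(a * b) : Matrix (Fin 2) (Fin 2) OO) = 1 := by
  rw [Units.val_mul]
  rw [mstar_mul]
  rw [mul_assoc]
  rw [← mul_assoc (mstar c (↑a : Matrix (Fin 2) (Fin 2) OO))
    (↑a : Matrix (Fin 2) (Fin 2) OO) (↑b : Matrix (Fin 2) (Fin 2) OO)]
  rw [ha, one_mul]
  exact hb

lemma gu_inv {OO : Type} [CommRing OO] (c : OO →+* OO) (a : GL (Fin 2) OO)
    (ha : mstar c ↑a * (↑a : Matrix (Fin 2) (Fin 2) OO) = 1) :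
    mstar c (↑a⁻¹) * (↑a⁻¹ : Matrix (Fin 2) (Fin 2) OO) = 1 := by
  have h1 : mstar c (↑a : Matrix (Fin 2) (Fin 2) OO) = ↑a⁻¹ := by
    calc mstar c (↑a : Matrix (Fin 2) (Fin 2) OO)
        = mstar c (↑a : Matrix (Fin 2) (Fin 2) OO) *
            ((↑a : Matrix (Fin 2) (Fin 2) OO) * (↑a⁻¹ : Matrix (Fin 2) (Fin 2) OO)) := by
          rw [a.mul_inv, mul_one]
      _ = mstar c (↑a : Matrix (Fin 2) (Fin 2) OO) * (↑a : Matrix (Fin 2) (Fin 2) OO) *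
            (↑a⁻¹ : Matrix (Fin 2) (Fin 2) OO) := by rw [mul_assoc]
      _ = ↑a⁻¹ := by rw [ha, one_mul]
  calc mstar c (↑a⁻¹ : Matrix (Fin 2) (Fin 2) OO) * (↑a⁻¹ : Matrix (Fin 2) (Fin 2) OO)
      = mstar c (↑a⁻¹ : Matrix (Fin 2) (Fin 2) OO) *
          mstar c (↑a : Matrix (Fin 2) (Fin 2) OO) := by rw [h1]
    _ = mstar c ((↑a : Matrix (Fin 2) (Fin 2) OO) * (↑a⁻¹ : Matrix (Fin 2) (Fin 2) OO)) :=
        (mstar_mul c _ _).symm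
    _ = 1 := by rw [a.mul_inv, mstar_one]

/-- The unitary group `GU₂(𝔬_ℓ)` as a subgroup of `GL₂(𝔒_ℓ)`, with respect to the
entrywise involution `c`. -/
noncomputable def GU2 (OO : Type) [CommRing OO] (c : OO →+* OO) :
    Subgroup (GL (Fin 2) OO) where
  carrier := {A | mstar c (A : Matrix (Fin 2) (Fin 2) OO) * (A : Matrix (Fin 2) (Fin 2) OO) = 1}
  one_mem' := gu_one c
  mul_mem' := fun ha hb => gu_mul c _ _ ha hb
  inv_mem' := fun ha => gu_inv c _ ha

open Matrix

lemma coords_unique {R OO : Type} [CommRing R] [CommRing OO] [Algebra R OO] (ε : OO)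
    (hbasis : ∀ z : OO, ∃! xy : R × R,
      z = algebraMap R OO xy.1 + algebraMap R OO xy.2 * ε)
    {a b a' b' : R}
    (h : algebraMap R OO a + algebraMap R OO b * ε
       = algebraMap R OO a' + algebraMap R OO b' * ε) : a = a' ∧ b = b' := by
  obtain ⟨w, -, hu⟩ := hbasis (algebraMap R OO a + algebraMap R OO b * ε)
  have h1 := hu (a, b) rfl
  have h2 := hu (a', b') (by exact h)
  have := h1.trans h2.symm
  exact ⟨congrArg Prod.fst this, congrArg Prod.snd this⟩

lemma Wmat_inv (OO : Type) [CommRing OO] : (Wmat OO)⁻¹ = Wmat OO :=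
  Matrix.inv_eq_right_inv (by
    show (!![0,1;1,0] : Matrix (Fin 2) (Fin 2) OO) * !![0,1;1,0] = 1
    rw [Matrix.mul_fin_two, Matrix.one_fin_two]; norm_num)

lemma mstar_fin_two {OO : Type} [CommRing OO] (c : OO →+* OO) (p q r s : OO) :
    mstar c !![p, q; r, s] = !![c s, c q; c r, c p] := by
  unfold mstar
  rw [Wmat_inv]
  have hmap : (!![p,q;r,s] : Matrix (Fin 2) (Fin 2) OO).map c = !![c p, c q; c r, c s] := by
    ext i j; fin_cases i <;> fin_cases j <;> simp [Matrix.map_apply]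
  rw [hmap]
  show (!![0,1;1,0] : Matrix (Fin 2) (Fin 2) OO) * _ * !![0,1;1,0] = _
  have ht : (!![c p, c q; c r, c s] : Matrix (Fin 2) (Fin 2) OO)ᵀ = !![c p, c r; c q, c s] := by
    ext i j; fin_cases i <;> fin_cases j <;> simp
  rw [ht, Matrix.mul_fin_two, Matrix.mul_fin_two]
  norm_num

section DVRlemmas
variable {O : Type} [CommRing O] [IsDomain O]

lemma pow_mul_mem_span_pow {π : O} (hπ0 : π ≠ 0) {i l : ℕ} (hil : i + 1 ≤ l) {z : O}
    (hz : π ^ i * z ∈ Ideal.span {π} ^ l) : z ∈ Ideal.span {π} := by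
  rw [Ideal.span_singleton_pow, Ideal.mem_span_singleton] at hz
  obtain ⟨t, ht⟩ := hz
  rw [Ideal.mem_span_singleton]
  have h2 : π ^ i * z = π ^ i * (π ^ (l - i) * t) := by
    rw [ht, ← mul_assoc, ← pow_add]; congr 2; omega
  have hz' : z = π ^ (l - i) * t := mul_left_cancel₀ (pow_ne_zero _ hπ0) h2
  exact ⟨π ^ (l - i - 1) * t, by
    rw [hz', ← mul_assoc, ← pow_succ']; congr 2; omega⟩

end DVRlemmas

section FF
-- solving a^2 - u*b^2 + 1 = 0 in an odd finite field, u a nonsquare (only u ≠ 0 needed)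
lemma ff_solve {K : Type*} [Field K] [Finite K] (hodd : Odd (ringChar K)) (u : K) (hu : u ≠ 0) :
    ∃ a b : K, a ^ 2 - u * b ^ 2 + 1 = 0 := by
  have : Fintype K := Fintype.ofFinite K
  have hchar : CharP K (ringChar K) := ringChar.charP K
  obtain ⟨n, hp, hcard⟩ := FiniteField.card K (ringChar K)
  have hcardodd : Fintype.card K % 2 = 1 := by
    rw [hcard]
    exact Nat.odd_iff.mp (hodd.pow)
  obtain ⟨a, b, hab⟩ := FiniteField.exists_root_sum_quadratic
    (f := Polynomial.X ^ 2 + Polynomial.C 1) (g := Polynomial.C (-u) * Polynomial.X ^ 2)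
    (Polynomial.degree_X_pow_add_C (by norm_num) 1)
    (by rw [Polynomial.degree_C_mul_X_pow 2 (neg_ne_zero.mpr hu)]; norm_cast)
    hcardodd
  refine ⟨a, b, ?_⟩
  simp only [Polynomial.eval_add, Polynomial.eval_pow, Polynomial.eval_X, Polynomial.eval_C,
    Polynomial.eval_mul] at hab
  linear_combination hab
end FF

section Hensel
variable {O : Type} [CommRing O] [IsLocalRing O]

lemma isUnit_iff_residue_ne_zero (x : O) :
    IsUnit x ↔ IsLocalRing.residue O x ≠ 0 := by
  constructor
  · intro h
    exact (h.map (IsLocalRing.residue O)).ne_zero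
  · intro h
    by_contra hnu
    exact h (Ideal.Quotient.eq_zero_iff_mem.mpr ((IsLocalRing.mem_maximalIdeal x).mpr (mem_nonunits_iff.mpr hnu)))

lemma hensel_norm (π u : O) (hπm : π ∈ IsLocalRing.maximalIdeal O)
    (h2 : IsUnit (2 : O)) (hu : IsUnit u) (l : ℕ) (hl : 1 ≤ l)
    (hbase : ∃ a b : O, a ^ 2 - u * b ^ 2 + 1 ∈ Ideal.span {π} ∧ (IsUnit a ∨ IsUnit b)) :
    ∃ a b : O, a ^ 2 - u * b ^ 2 + 1 ∈ Ideal.span {π} ^ l := by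
  have hπ0 : IsLocalRing.residue O π = 0 := Ideal.Quotient.eq_zero_iff_mem.mpr hπm
  -- strengthen to include unit condition, induct
  suffices H : ∀ k : ℕ, 1 ≤ k →
      ∃ a b : O, a ^ 2 - u * b ^ 2 + 1 ∈ Ideal.span {π} ^ k ∧ (IsUnit a ∨ IsUnit b) by
    obtain ⟨a, b, hab, -⟩ := H l hl
    exact ⟨a, b, hab⟩
  intro k hk
  induction k with
  | zero => omega
  | succ k ih =>
    rcases Nat.eq_or_lt_of_le hk with hk1 | hk2
    · obtain ⟨a, b, hmem, hunit⟩ := hbase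
      exact ⟨a, b, by rw [← hk1, pow_one]; exact hmem, hunit⟩
    · have hk' : 1 ≤ k := by omega
      obtain ⟨a, b, hmem, hunit⟩ := ih hk'
      rw [Ideal.span_singleton_pow, Ideal.mem_span_singleton] at hmem
      obtain ⟨c, hc⟩ := hmem
      have hπres : ∀ t : O, IsLocalRing.residue O (π ^ k * t) = 0 := by
        intro t
        rw [RingHom.map_mul, RingHom.map_pow, hπ0, zero_pow (by omega : k ≠ 0), zero_mul]
      rcases hunit with ha | hb
      · have ha2 : IsUnit (2 * a) := h2.mul ha
        set t : O := -(c * ↑ha2.unit⁻¹) with ht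
        refine ⟨a + π ^ k * t, b, ?_, ?_⟩
        · rw [Ideal.span_singleton_pow, Ideal.mem_span_singleton]
          refine ⟨π ^ (k - 1) * t ^ 2, ?_⟩
          have hinv : (2 * a) * ↑ha2.unit⁻¹ = 1 := ha2.mul_val_inv
          have hpow : π ^ (k + 1) * π ^ (k-1) = π ^ k * π ^ k := by
            rw [← pow_add, ← pow_add]; congr 1; omega
          linear_combination hc + 2*a*π^k*ht - π^k*c*hinv - t^2*hpow
        · left
          rw [isUnit_iff_residue_ne_zero] at ha ⊢
          rwa [RingHom.map_add, hπres t, add_zero]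
      · have hb2 : IsUnit (2 * u * b) := (h2.mul hu).mul hb
        set t : O := c * ↑hb2.unit⁻¹ with ht
        refine ⟨a, b + π ^ k * t, ?_, ?_⟩
        · rw [Ideal.span_singleton_pow, Ideal.mem_span_singleton]
          refine ⟨-(u * (π ^ (k - 1) * t ^ 2)), ?_⟩
          have hinv : (2 * u * b) * ↑hb2.unit⁻¹ = 1 := hb2.mul_val_inv
          have hpow : π ^ (k + 1) * π ^ (k-1) = π ^ k * π ^ k := by
            rw [← pow_add, ← pow_add]; congr 1; omega
          linear_combination hc - 2*u*b*π^k*ht - π^k*c*hinv + u*t^2*hpow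
        · right
          rw [isUnit_iff_residue_ne_zero] at hb ⊢
          rwa [RingHom.map_add, hπres t, add_zero]
end Hensel

lemma fin2_ext {OO : Type} [CommRing OO] {a b e f a' b' e' f' : OO}
    (h : (!![a, b; e, f] : Matrix (Fin 2) (Fin 2) OO) = !![a', b'; e', f']) :
    a = a' ∧ b = b' ∧ e = e' ∧ f = f' :=
  ⟨by simpa using congrFun (congrFun h 0) 0, by simpa using congrFun (congrFun h 0) 1,
   by simpa using congrFun (congrFun h 1) 0, by simpa using congrFun (congrFun h 1) 1⟩

lemma fin2_congr {OO : Type} [CommRing OO] {a b e f a' b' e' f' : OO}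
    (h1 : a = a') (h2 : b = b') (h3 : e = e') (h4 : f = f') :
    (!![a, b; e, f] : Matrix (Fin 2) (Fin 2) OO) = !![a', b'; e', f'] := by
  rw [h1, h2, h3, h4]

set_option maxHeartbeats 1000000 in
theorem type_d_real_not_strongly_real_GU2
    (O : Type) [CommRing O] [IsDomain O] [IsDiscreteValuationRing O]
    [IsAdicComplete (IsLocalRing.maximalIdeal O) O]
    (π : O) (hπ : IsLocalRing.maximalIdeal O = Ideal.span {π})
    [Finite (IsLocalRing.ResidueField O)]
    (hodd : Odd (ringChar (IsLocalRing.ResidueField O)))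
    (q : ℕ) (hq : Nat.card (IsLocalRing.ResidueField O) = q)
    (ℓ : ℕ) (hℓ : 1 ≤ ℓ)
    -- the unramified quadratic extension 𝔒_ℓ = 𝔬_ℓ[ε]
    (OO : Type) [CommRing OO] [Algebra (O ⧸ Ideal.span {π} ^ ℓ) OO]
    (ε : OO) (u : O) (hu : IsUnit u)
    (hnonsq : ¬ ∃ t : IsLocalRing.ResidueField O, t ^ 2 = IsLocalRing.residue O u)
    (hε2 : ε ^ 2 = algebraMap (O ⧸ Ideal.span {π} ^ ℓ) OO
      (Ideal.Quotient.mk (Ideal.span {π} ^ ℓ) u))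
    (hbasis : ∀ z : OO, ∃! xy : (O ⧸ Ideal.span {π} ^ ℓ) × (O ⧸ Ideal.span {π} ^ ℓ),
      z = algebraMap (O ⧸ Ideal.span {π} ^ ℓ) OO xy.1 +
        algebraMap (O ⧸ Ideal.span {π} ^ ℓ) OO xy.2 * ε)
    -- the Galois involution `x ↦ x°`
    (cj : OO ≃ₐ[O ⧸ Ideal.span {π} ^ ℓ] OO) (hcj : cj ε = -ε)
    (i : ℕ) (hi : i ≤ ℓ - 1) (β : O ⧸ Ideal.span {π} ^ ℓ)
    (x : (O ⧸ Ideal.span {π} ^ ℓ)ˣ) (y : OOˣ)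
    (h1 : (algebraMap (O ⧸ Ideal.span {π} ^ ℓ) OO x) ^ 2 +
      (algebraMap (O ⧸ Ideal.span {π} ^ ℓ) OO
        (Ideal.Quotient.mk (Ideal.span {π} ^ ℓ) π)) ^ (2 * i + 1) *
      algebraMap (O ⧸ Ideal.span {π} ^ ℓ) OO β * ↑y * cj ↑y = 1)
    (h2 : (algebraMap (O ⧸ Ideal.span {π} ^ ℓ) OO x) ^ 2 -
      (algebraMap (O ⧸ Ideal.span {π} ^ ℓ) OO
        (Ideal.Quotient.mk (Ideal.span {π} ^ ℓ) π)) ^ (2 * i + 1) *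
      algebraMap (O ⧸ Ideal.span {π} ^ ℓ) OO β * (y : OO) ^ 2 = 1)
    (h3 : (algebraMap (O ⧸ Ideal.span {π} ^ ℓ) OO
        (Ideal.Quotient.mk (Ideal.span {π} ^ ℓ) π)) ^ i *
      (algebraMap (O ⧸ Ideal.span {π} ^ ℓ) OO x * cj ↑y +
       cj (algebraMap (O ⧸ Ideal.span {π} ^ ℓ) OO x) * ↑y) = 0)
    (A : ↥(GU2 OO (cj : OO →+* OO)))
    (hA : ((A : GL (Fin 2) OO) : Matrix (Fin 2) (Fin 2) OO) =
      !![algebraMap (O ⧸ Ideal.span {π} ^ ℓ) OO x,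
         (algebraMap (O ⧸ Ideal.span {π} ^ ℓ) OO
           (Ideal.Quotient.mk (Ideal.span {π} ^ ℓ) π)) ^ (i + 1) *
           algebraMap (O ⧸ Ideal.span {π} ^ ℓ) OO β * ↑y;
         (algebraMap (O ⧸ Ideal.span {π} ^ ℓ) OO
           (Ideal.Quotient.mk (Ideal.span {π} ^ ℓ) π)) ^ i * ↑y,
         algebraMap (O ⧸ Ideal.span {π} ^ ℓ) OO x]) :
    IsConj A A⁻¹ ∧
      ¬ ∃ h : ↥(GU2 OO (cj : OO →+* OO)), h ^ 2 = 1 ∧ h * A * h⁻¹ = A⁻¹ := by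
    -- notation
  have hcapp : ∀ z : OO, (cj : OO →+* OO) z = cj z := fun z => rfl
  -- basic facts
  have hπ0 : π ≠ 0 := by
    intro h0
    exact IsDiscreteValuationRing.not_a_field O (by
      rw [hπ, h0, Ideal.span_singleton_eq_bot.mpr rfl])
  have hil : i + 1 ≤ ℓ := by omega
  have hπmem : π ∈ IsLocalRing.maximalIdeal O := by
    rw [hπ]; exact Ideal.mem_span_singleton_self π
  -- 2 is a unit
  have hk2 : (2 : IsLocalRing.ResidueField O) ≠ 0 := by
    intro h0
    have hdvd : ringChar (IsLocalRing.ResidueField O) ∣ 2 := by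
      have := (CharP.cast_eq_zero_iff (IsLocalRing.ResidueField O)
        (ringChar (IsLocalRing.ResidueField O)) 2).mp (by exact_mod_cast h0)
      exact this
    rcases (Nat.dvd_prime Nat.prime_two).mp hdvd with h0' | h0'
    · exact CharP.ringChar_ne_one h0'
    · rw [h0'] at hodd; exact (by decide : ¬ Odd 2) hodd
  have h2O : IsUnit (2 : O) := by
    rw [isUnit_iff_residue_ne_zero]
    rwa [show IsLocalRing.residue O (2 : O) = (2 : IsLocalRing.ResidueField O) from
      _root_.map_ofNat _ 2]
  have h2R : IsUnit (2 : (O ⧸ Ideal.span {π} ^ ℓ)) := by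
    have := h2O.map (Ideal.Quotient.mk (Ideal.span {π} ^ ℓ))
    rwa [show (Ideal.Quotient.mk (Ideal.span {π} ^ ℓ)) (2 : O) = (2 : (O ⧸ Ideal.span {π} ^ ℓ)) from _root_.map_ofNat _ 2] at this
  -- the residue map from (O ⧸ Ideal.span {π} ^ ℓ)
  have hle : Ideal.span {π} ^ ℓ ≤ IsLocalRing.maximalIdeal O := by
    rw [hπ]
    exact Ideal.pow_le_self (by omega)
  set ρ : (O ⧸ Ideal.span {π} ^ ℓ) →+* IsLocalRing.ResidueField O := Ideal.Quotient.factor hle with hρ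
  have hρmk : ∀ w : O, ρ ((Ideal.Quotient.mk (Ideal.span {π} ^ ℓ)) w) = IsLocalRing.residue O w := fun w =>
    Ideal.Quotient.factor_mk hle w
  -- residue of u is nonzero
  have hune : IsLocalRing.residue O u ≠ 0 := ((isUnit_iff_residue_ne_zero u).mp hu)
  -- coordinates
  have hco := fun {a b a' b' : (O ⧸ Ideal.span {π} ^ ℓ)} h => coords_unique (R := (O ⧸ Ideal.span {π} ^ ℓ)) (OO := OO) ε hbasis
    (a := a) (b := b) (a' := a') (b' := b') h
  have hcoord : ∀ a b : (O ⧸ Ideal.span {π} ^ ℓ), (cj : OO →+* OO) ((algebraMap (O ⧸ Ideal.span {π} ^ ℓ) OO) a + (algebraMap (O ⧸ Ideal.span {π} ^ ℓ) OO) b * ε) = (algebraMap (O ⧸ Ideal.span {π} ^ ℓ) OO) a + (algebraMap (O ⧸ Ideal.span {π} ^ ℓ) OO) (-b) * ε := by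
    intro a b
    rw [hcapp, _root_.map_add, _root_.map_mul, cj.commutes, cj.commutes, hcj, _root_.map_neg]
    ring
  ---------------------------------------------------------------------------
  -- PART 1 : existence of an element of norm -1, and reality
  ---------------------------------------------------------------------------
  have hbase : ∃ a b : O, a ^ 2 - u * b ^ 2 + 1 ∈ Ideal.span {π} ∧ (IsUnit a ∨ IsUnit b) := by
    obtain ⟨a0, b0, hab0⟩ := ff_solve hodd (IsLocalRing.residue O u) hune
    obtain ⟨a1, ha1⟩ := Ideal.Quotient.mk_surjective (I := IsLocalRing.maximalIdeal O) a0
    obtain ⟨b1, hb1⟩ := Ideal.Quotient.mk_surjective (I := IsLocalRing.maximalIdeal O) b0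
    have hres : IsLocalRing.residue O (a1 ^ 2 - u * b1 ^ 2 + 1) = 0 := by
      have : IsLocalRing.residue O a1 = a0 := ha1
      have h2' : IsLocalRing.residue O b1 = b0 := hb1
      rw [_root_.map_add, _root_.map_sub, _root_.map_pow, _root_.map_mul, _root_.map_pow, this, h2', _root_.map_one]
      exact hab0
    refine ⟨a1, b1, ?_, ?_⟩
    · rw [← hπ]
      exact Ideal.Quotient.eq_zero_iff_mem.mp hres
    · by_cases hz : IsLocalRing.residue O a1 = 0
      · right
        rw [isUnit_iff_residue_ne_zero]
        intro hz2
        have e1 : a0 = 0 := by rw [← ha1]; exact hz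
        have e2 : b0 = 0 := by rw [← hb1]; exact hz2
        rw [e1, e2] at hab0
        simp at hab0
      · left; exact (isUnit_iff_residue_ne_zero a1).mpr hz
  obtain ⟨a, b, hab⟩ := hensel_norm π u hπmem h2O hu ℓ hℓ hbase
  -- the norm -1 element
  obtain ⟨p0, hp0⟩ : ∃ p0 : OO, p0 = (algebraMap (O ⧸ Ideal.span {π} ^ ℓ) OO) ((Ideal.Quotient.mk (Ideal.span {π} ^ ℓ)) a) + (algebraMap (O ⧸ Ideal.span {π} ^ ℓ) OO) ((Ideal.Quotient.mk (Ideal.span {π} ^ ℓ)) b) * ε := ⟨_, rfl⟩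
  have habR : ((Ideal.Quotient.mk (Ideal.span {π} ^ ℓ)) a) ^ 2 - ((Ideal.Quotient.mk (Ideal.span {π} ^ ℓ)) u) * ((Ideal.Quotient.mk (Ideal.span {π} ^ ℓ)) b) ^ 2 + 1 = 0 := by
    rw [show (((Ideal.Quotient.mk (Ideal.span {π} ^ ℓ)) a) ^ 2 - ((Ideal.Quotient.mk (Ideal.span {π} ^ ℓ)) u) * ((Ideal.Quotient.mk (Ideal.span {π} ^ ℓ)) b) ^ 2 + 1 : (O ⧸ Ideal.span {π} ^ ℓ)) = (Ideal.Quotient.mk (Ideal.span {π} ^ ℓ)) (a ^ 2 - u * b ^ 2 + 1) by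
      push_cast [_root_.map_add, _root_.map_sub, _root_.map_mul, _root_.map_pow, _root_.map_one]; ring]
    exact Ideal.Quotient.eq_zero_iff_mem.mpr hab
  have hcp0 : (cj : OO →+* OO) p0 = (algebraMap (O ⧸ Ideal.span {π} ^ ℓ) OO) ((Ideal.Quotient.mk (Ideal.span {π} ^ ℓ)) a) + (algebraMap (O ⧸ Ideal.span {π} ^ ℓ) OO) (-((Ideal.Quotient.mk (Ideal.span {π} ^ ℓ)) b)) * ε := by rw [hp0]; exact hcoord _ _
  have hnorm : p0 * (cj : OO →+* OO) p0 = -1 := by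
    rw [hcp0, hp0]
    have expand : ((algebraMap (O ⧸ Ideal.span {π} ^ ℓ) OO) ((Ideal.Quotient.mk (Ideal.span {π} ^ ℓ)) a) + (algebraMap (O ⧸ Ideal.span {π} ^ ℓ) OO) ((Ideal.Quotient.mk (Ideal.span {π} ^ ℓ)) b) * ε) * ((algebraMap (O ⧸ Ideal.span {π} ^ ℓ) OO) ((Ideal.Quotient.mk (Ideal.span {π} ^ ℓ)) a) + (algebraMap (O ⧸ Ideal.span {π} ^ ℓ) OO) (-((Ideal.Quotient.mk (Ideal.span {π} ^ ℓ)) b)) * ε)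
        = (algebraMap (O ⧸ Ideal.span {π} ^ ℓ) OO) (((Ideal.Quotient.mk (Ideal.span {π} ^ ℓ)) a) ^ 2 - ((Ideal.Quotient.mk (Ideal.span {π} ^ ℓ)) u) * ((Ideal.Quotient.mk (Ideal.span {π} ^ ℓ)) b) ^ 2) := by
      rw [_root_.map_neg, _root_.map_sub, _root_.map_mul, _root_.map_pow, _root_.map_pow]
      linear_combination (- ((algebraMap (O ⧸ Ideal.span {π} ^ ℓ) OO) ((Ideal.Quotient.mk (Ideal.span {π} ^ ℓ)) b))^2) * hε2
    rw [expand, show ((Ideal.Quotient.mk (Ideal.span {π} ^ ℓ)) a) ^ 2 - ((Ideal.Quotient.mk (Ideal.span {π} ^ ℓ)) u) * ((Ideal.Quotient.mk (Ideal.span {π} ^ ℓ)) b) ^ 2 = -1 by linear_combination habR]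
    rw [_root_.map_neg, _root_.map_one]
  -- the conjugating element
  have hginv : (!![p0, 0; 0, -p0] : Matrix (Fin 2) (Fin 2) OO) *
      !![-((cj : OO →+* OO) p0), 0; 0, (cj : OO →+* OO) p0] = 1 ∧
      (!![-((cj : OO →+* OO) p0), 0; 0, (cj : OO →+* OO) p0] : Matrix (Fin 2) (Fin 2) OO) *
      !![p0, 0; 0, -p0] = 1 := by
    constructor <;>
    · rw [Matrix.mul_fin_two, Matrix.one_fin_two]
      refine fin2_congr ?_ ?_ ?_ ?_ <;> first | ring1 | linear_combination -hnorm
  -- the conjugating unit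
  set g : GL (Fin 2) OO := ⟨!![p0, 0; 0, -p0], !![-((cj : OO →+* OO) p0), 0; 0, (cj : OO →+* OO) p0], hginv.1, hginv.2⟩
    with hg
  have hgval : ((g : GL (Fin 2) OO) : Matrix (Fin 2) (Fin 2) OO) = !![p0, 0; 0, -p0] := rfl
  have hgmem : g ∈ GU2 OO (cj : OO →+* OO) := by
    show mstar (cj : OO →+* OO) (↑g) * (↑g : Matrix (Fin 2) (Fin 2) OO) = 1
    rw [hgval, mstar_fin_two]
    simp only [_root_.map_neg, _root_.map_zero]
    rw [Matrix.mul_fin_two, Matrix.one_fin_two]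
    refine fin2_congr ?_ ?_ ?_ ?_ <;> first | ring1 | linear_combination -hnorm
  set H : ↥(GU2 OO (cj : OO →+* OO)) := ⟨g, hgmem⟩ with hH
  have hkeyM : ((A : GL (Fin 2) OO) : Matrix (Fin 2) (Fin 2) OO) * ((H : GL (Fin 2) OO) : Matrix (Fin 2) (Fin 2) OO) * ((A : GL (Fin 2) OO) : Matrix (Fin 2) (Fin 2) OO)
      = ((H : GL (Fin 2) OO) : Matrix (Fin 2) (Fin 2) OO) := by
    have hHval : ((↑H : GL (Fin 2) OO) : Matrix (Fin 2) (Fin 2) OO) = !![p0, 0; 0, -p0] := rfl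
    rw [hHval, hA, Matrix.mul_fin_two, Matrix.mul_fin_two]
    refine fin2_congr ?_ ?_ ?_ ?_ <;>
      first | ring1 | linear_combination p0 * h2 | linear_combination (-p0) * h2
  have hkey : A * H * A = H := by
    apply Subtype.ext
    apply Units.ext
    simpa only [MulMemClass.coe_mul, Units.val_mul] using hkeyM
  have hconj1 : H⁻¹ * A * H = A⁻¹ := by
    have e1 : A * H = H * A⁻¹ := by
      calc A * H = (A * H * A) * A⁻¹ := by group
      _ = H * A⁻¹ := by rw [hkey]
    calc H⁻¹ * A * H = H⁻¹ * (A * H) := by group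
    _ = H⁻¹ * (H * A⁻¹) := by rw [e1]
    _ = A⁻¹ := by group
  refine ⟨isConj_iff.mpr ⟨H⁻¹, by rw [inv_inv]; exact hconj1⟩, ?_⟩
  ---------------------------------------------------------------------------
  -- PART 2 : not strongly real
  ---------------------------------------------------------------------------
  rintro ⟨h, hsq, hconj⟩
  obtain ⟨M, hMdef⟩ : ∃ M : Matrix (Fin 2) (Fin 2) OO,
      ((h : GL (Fin 2) OO) : Matrix (Fin 2) (Fin 2) OO) = M := ⟨_, rfl⟩
  have hUmem : mstar (cj : OO →+* OO) M * M = 1 := by rw [← hMdef]; exact h.2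
  have hS : M * M = 1 := by
    have e2 := congrArg
      (fun z : ↥(GU2 OO (cj : OO →+* OO)) => ((z : GL (Fin 2) OO) : Matrix (Fin 2) (Fin 2) OO)) hsq
    simp only [pow_two, MulMemClass.coe_mul, Units.val_mul, SubmonoidClass.coe_pow,
      Units.val_pow_eq_pow_val, OneMemClass.coe_one, Units.val_one, hMdef] at e2
    exact e2
  have hkey2 : A * h * A = h := by
    calc A * h * A = A * (h * A * h⁻¹) * h := by group
    _ = A * A⁻¹ * h := by rw [hconj]
    _ = h := by group
  have hAMA : ((A : GL (Fin 2) OO) : Matrix (Fin 2) (Fin 2) OO) * M * ((A : GL (Fin 2) OO) : Matrix (Fin 2) (Fin 2) OO) = M := by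
    have e3 := congrArg
      (fun z : ↥(GU2 OO (cj : OO →+* OO)) => ((z : GL (Fin 2) OO) : Matrix (Fin 2) (Fin 2) OO)) hkey2
    simp only [MulMemClass.coe_mul, Units.val_mul, hMdef] at e3
    exact e3
  obtain ⟨A', hA'⟩ : ∃ A' : Matrix (Fin 2) (Fin 2) OO,
      A' = !![(algebraMap (O ⧸ Ideal.span {π} ^ ℓ) OO) ↑x, -((algebraMap (O ⧸ Ideal.span {π} ^ ℓ) OO) ((Ideal.Quotient.mk (Ideal.span {π} ^ ℓ)) π) ^ (i+1) * (algebraMap (O ⧸ Ideal.span {π} ^ ℓ) OO) β * ↑y); -((algebraMap (O ⧸ Ideal.span {π} ^ ℓ) OO) ((Ideal.Quotient.mk (Ideal.span {π} ^ ℓ)) π) ^ i * ↑y), (algebraMap (O ⧸ Ideal.span {π} ^ ℓ) OO) ↑x] := ⟨_, rfl⟩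
  have hA'A : A' * ((A : GL (Fin 2) OO) : Matrix (Fin 2) (Fin 2) OO) = 1 := by
    rw [hA', hA, Matrix.mul_fin_two, Matrix.one_fin_two]
    refine fin2_congr ?_ ?_ ?_ ?_ <;> first | ring1 | linear_combination h2
  have hMA : M * ((A : GL (Fin 2) OO) : Matrix (Fin 2) (Fin 2) OO) = A' * M := by
    calc M * ((A : GL (Fin 2) OO) : Matrix (Fin 2) (Fin 2) OO)
        = A' * (((A : GL (Fin 2) OO) : Matrix (Fin 2) (Fin 2) OO) * M * ((A : GL (Fin 2) OO) : Matrix (Fin 2) (Fin 2) OO)) := by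
          rw [← Matrix.mul_assoc, ← Matrix.mul_assoc, hA'A, Matrix.one_mul]
    _ = A' * M := by rw [hAMA]
  obtain ⟨p, q', r, s, hM⟩ : ∃ p q' r s, M = !![p, q'; r, s] :=
    ⟨_, _, _, _, Matrix.eta_fin_two M⟩
  have hmM : mstar (cj : OO →+* OO) M = M := by
    calc mstar (cj : OO →+* OO) M = mstar (cj : OO →+* OO) M * (M * M) := by rw [hS, Matrix.mul_one]
    _ = (mstar (cj : OO →+* OO) M * M) * M := (Matrix.mul_assoc _ _ _).symm
    _ = M := by rw [hUmem, Matrix.one_mul]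
  rw [hM, mstar_fin_two] at hmM
  obtain ⟨hsp, hqq, hrr, hps⟩ := fin2_ext hmM
  obtain ⟨⟨p1, p2⟩, hp, -⟩ := hbasis p
  obtain ⟨⟨q1, q2⟩, hq, -⟩ := hbasis q'
  obtain ⟨⟨r1, r2⟩, hr, -⟩ := hbasis r
  have hq2 : q2 = 0 := by
    have e := hqq
    rw [hq, hcoord q1 q2] at e
    have e2 := (hco e).2
    have e3 : (2 : (O ⧸ Ideal.span {π} ^ ℓ)) * q2 = 0 := by linear_combination -e2
    exact (IsUnit.mul_right_eq_zero h2R).mp e3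
  have hr2 : r2 = 0 := by
    have e := hrr
    rw [hr, hcoord r1 r2] at e
    have e2 := (hco e).2
    have e3 : (2 : (O ⧸ Ideal.span {π} ^ ℓ)) * r2 = 0 := by linear_combination -e2
    exact (IsUnit.mul_right_eq_zero h2R).mp e3
  rw [hq2, _root_.map_zero, zero_mul, add_zero] at hq
  rw [hr2, _root_.map_zero, zero_mul, add_zero] at hr
  have hs : s = (algebraMap (O ⧸ Ideal.span {π} ^ ℓ) OO) p1 + (algebraMap (O ⧸ Ideal.span {π} ^ ℓ) OO) (-p2) * ε := by rw [← hps, hp]; exact hcoord _ _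
  rw [hM, hA, hA', Matrix.mul_fin_two, Matrix.mul_fin_two] at hMA
  obtain ⟨e11, -, e21, -⟩ := fin2_ext hMA
  have ey1 : (↑y : OO) * ((algebraMap (O ⧸ Ideal.span {π} ^ ℓ) OO) ((Ideal.Quotient.mk (Ideal.span {π} ^ ℓ)) π) ^ i * (p + s)) = 0 := by linear_combination e21
  have hsum : (algebraMap (O ⧸ Ideal.span {π} ^ ℓ) OO) ((Ideal.Quotient.mk (Ideal.span {π} ^ ℓ)) π) ^ i * (p + s) = 0 := (Units.mul_right_eq_zero y).mp ey1
  have ey2 : (↑y : OO) * ((algebraMap (O ⧸ Ideal.span {π} ^ ℓ) OO) ((Ideal.Quotient.mk (Ideal.span {π} ^ ℓ)) π) ^ i * q' + (algebraMap (O ⧸ Ideal.span {π} ^ ℓ) OO) ((Ideal.Quotient.mk (Ideal.span {π} ^ ℓ)) π) ^ (i+1) * (algebraMap (O ⧸ Ideal.span {π} ^ ℓ) OO) β * r) = 0 := by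
    linear_combination e11
  have hqr : (algebraMap (O ⧸ Ideal.span {π} ^ ℓ) OO) ((Ideal.Quotient.mk (Ideal.span {π} ^ ℓ)) π) ^ i * q' + (algebraMap (O ⧸ Ideal.span {π} ^ ℓ) OO) ((Ideal.Quotient.mk (Ideal.span {π} ^ ℓ)) π) ^ (i+1) * (algebraMap (O ⧸ Ideal.span {π} ^ ℓ) OO) β * r = 0 :=
    (Units.mul_right_eq_zero y).mp ey2
  rw [hp, hs] at hsum
  have hsum' : (algebraMap (O ⧸ Ideal.span {π} ^ ℓ) OO) (((Ideal.Quotient.mk (Ideal.span {π} ^ ℓ)) π) ^ i * (2 * p1)) + (algebraMap (O ⧸ Ideal.span {π} ^ ℓ) OO) 0 * ε = (algebraMap (O ⧸ Ideal.span {π} ^ ℓ) OO) 0 + (algebraMap (O ⧸ Ideal.span {π} ^ ℓ) OO) 0 * ε := by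
    simp only [_root_.map_mul, _root_.map_pow, _root_.map_zero, _root_.map_ofNat,
      _root_.map_neg] at hsum ⊢
    linear_combination hsum
  have hp1 : ((Ideal.Quotient.mk (Ideal.span {π} ^ ℓ)) π) ^ i * p1 = 0 := by
    have e := (hco hsum').1
    have e2 : (2 : (O ⧸ Ideal.span {π} ^ ℓ)) * (((Ideal.Quotient.mk (Ideal.span {π} ^ ℓ)) π) ^ i * p1) = 0 := by linear_combination e
    exact (IsUnit.mul_right_eq_zero h2R).mp e2
  rw [hq, hr] at hqr
  have hqr' : (algebraMap (O ⧸ Ideal.span {π} ^ ℓ) OO) (((Ideal.Quotient.mk (Ideal.span {π} ^ ℓ)) π) ^ i * q1 + ((Ideal.Quotient.mk (Ideal.span {π} ^ ℓ)) π) ^ (i+1) * (β * r1)) + (algebraMap (O ⧸ Ideal.span {π} ^ ℓ) OO) 0 * ε = (algebraMap (O ⧸ Ideal.span {π} ^ ℓ) OO) 0 + (algebraMap (O ⧸ Ideal.span {π} ^ ℓ) OO) 0 * ε := by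
    simp only [_root_.map_add, _root_.map_mul, _root_.map_pow, _root_.map_zero]
    linear_combination hqr
  have hq1 : ((Ideal.Quotient.mk (Ideal.span {π} ^ ℓ)) π) ^ i * q1 + ((Ideal.Quotient.mk (Ideal.span {π} ^ ℓ)) π) ^ (i+1) * (β * r1) = 0 := (hco hqr').1
  rw [hM, Matrix.mul_fin_two, Matrix.one_fin_two] at hS
  obtain ⟨eS, -, -, -⟩ := fin2_ext hS
  rw [hp, hq, hr] at eS
  have hsq' : (algebraMap (O ⧸ Ideal.span {π} ^ ℓ) OO) (p1 ^ 2 + ((Ideal.Quotient.mk (Ideal.span {π} ^ ℓ)) u) * p2 ^ 2 + q1 * r1) + (algebraMap (O ⧸ Ideal.span {π} ^ ℓ) OO) (2 * (p1 * p2)) * ε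
      = (algebraMap (O ⧸ Ideal.span {π} ^ ℓ) OO) 1 + (algebraMap (O ⧸ Ideal.span {π} ^ ℓ) OO) 0 * ε := by
    simp only [_root_.map_add, _root_.map_mul, _root_.map_pow, _root_.map_zero,
      _root_.map_one, _root_.map_ofNat]
    linear_combination eS - ((algebraMap (O ⧸ Ideal.span {π} ^ ℓ) OO) p2) ^ 2 * hε2
  have hid : p1 ^ 2 + ((Ideal.Quotient.mk (Ideal.span {π} ^ ℓ)) u) * p2 ^ 2 + q1 * r1 = 1 := (hco hsq').1
  -- to the residue field
  obtain ⟨P, hP⟩ := Ideal.Quotient.mk_surjective (I := Ideal.span {π} ^ ℓ) p1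
  have hmemP : π ^ i * P ∈ Ideal.span {π} ^ ℓ := by
    rw [← Ideal.Quotient.eq_zero_iff_mem]
    show (Ideal.Quotient.mk (Ideal.span {π} ^ ℓ)) (π ^ i * P) = 0
    rw [_root_.map_mul, _root_.map_pow, hP]
    exact hp1
  have hρp1 : ρ p1 = 0 := by
    rw [← hP, hρmk]
    exact Ideal.Quotient.eq_zero_iff_mem.mpr
      (by rw [hπ]; exact pow_mul_mem_span_pow hπ0 hil hmemP)
  obtain ⟨Q, hQ⟩ := Ideal.Quotient.mk_surjective (I := Ideal.span {π} ^ ℓ) q1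
  obtain ⟨Rl, hRl⟩ := Ideal.Quotient.mk_surjective (I := Ideal.span {π} ^ ℓ) r1
  obtain ⟨Bl, hBl⟩ := Ideal.Quotient.mk_surjective (I := Ideal.span {π} ^ ℓ) β
  have hmemQ : π ^ i * (Q + π * (Bl * Rl)) ∈ Ideal.span {π} ^ ℓ := by
    rw [← Ideal.Quotient.eq_zero_iff_mem]
    show (Ideal.Quotient.mk (Ideal.span {π} ^ ℓ)) (π ^ i * (Q + π * (Bl * Rl))) = 0
    simp only [_root_.map_mul, _root_.map_pow, _root_.map_add, hP, hQ, hRl, hBl]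
    linear_combination hq1
  have memQspan : Q + π * (Bl * Rl) ∈ Ideal.span {π} :=
    pow_mul_mem_span_pow hπ0 hil hmemQ
  have memQ : Q ∈ Ideal.span {π} := by
    have hmul : π * (Bl * Rl) ∈ Ideal.span {π} :=
      Ideal.mul_mem_right _ _ (Ideal.mem_span_singleton_self π)
    simpa using Ideal.sub_mem _ memQspan hmul
  have hρq1 : ρ q1 = 0 := by
    rw [← hQ, hρmk]
    exact Ideal.Quotient.eq_zero_iff_mem.mpr (by rw [hπ]; exact memQ)
  have hfin := congrArg ρ hid
  simp only [_root_.map_add, _root_.map_mul, _root_.map_pow, _root_.map_one] at hfin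
  rw [hρp1, hρq1] at hfin
  have hus : IsLocalRing.residue O u * (ρ p2) ^ 2 = 1 := by
    rw [← hρmk u]
    linear_combination hfin
  have hne : ρ p2 ≠ 0 := by
    intro h0; rw [h0] at hus; simp at hus
  refine hnonsq ⟨(ρ p2)⁻¹, ?_⟩
  calc ((ρ p2)⁻¹) ^ 2 = ((ρ p2)⁻¹) ^ 2 * (IsLocalRing.residue O u * (ρ p2) ^ 2) := by
        rw [hus, mul_one]
  _ = IsLocalRing.residue O u * ((ρ p2)⁻¹ * ρ p2) ^ 2 := by ring
  _ = IsLocalRing.residue O u := by rw [inv_mul_cancel₀ hne, one_pow, mul_one]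
end

section
/- Let ℓ ≥ 1. The number of elements g ∈ GL₂(𝔬_ℓ) with g² = I equals (q + 1)·q^{2ℓ−1} + 2. -/
open Matrix

set_option linter.unusedSectionVars false
set_option linter.unusedVariables false
set_option maxHeartbeats 1000000

open Matrix

section Helpers

lemma card_split {α : Type*} [Finite α] (P Q S : α → Prop)
    (hiff : ∀ x, P x ↔ Q x ∨ S x) (hdisj : ∀ x, Q x → S x → False) :
    Nat.card {x // P x} = Nat.card {x // Q x} + Nat.card {x // S x} := by
  classical
  have hd : Disjoint Q S := by
    rw [disjoint_iff_inf_le]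
    intro x hx
    exact (hdisj x hx.1 hx.2).elim
  have e : {x // P x} ≃ {x // Q x} ⊕ {x // S x} :=
    (Equiv.subtypeEquivRight hiff).trans (subtypeOrEquiv Q S hd)
  rw [Nat.card_congr e, Nat.card_sum]

lemma card_split_univ {α : Type*} [Finite α] (Q S : α → Prop)
    (hcov : ∀ x, Q x ∨ S x) (hdisj : ∀ x, Q x → S x → False) :
    Nat.card α = Nat.card {x // Q x} + Nat.card {x // S x} := by
  rw [← card_split (fun _ => True) Q S (fun x => ⟨fun _ => hcov x, fun _ => trivial⟩) hdisj]
  exact (Nat.card_congr (Equiv.subtypeUnivEquiv (fun x => trivial))).symm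

lemma card_eq_singleton {α : Type*} (a : α) : Nat.card {x : α // x = a} = 1 :=
  Nat.card_eq_one_iff_unique.mpr ⟨⟨fun x y => Subtype.ext (x.2.trans y.2.symm)⟩, ⟨⟨a, rfl⟩⟩⟩

end Helpers

section Count

variable {R : Type} [CommRing R] [IsLocalRing R] [Finite R]

lemma card_isUnit : Nat.card {x : R // IsUnit x} = Nat.card Rˣ :=
  Nat.card_congr
    ⟨fun x => x.2.unit, fun u => ⟨u, u.isUnit⟩, fun x => Subtype.ext x.2.unit_spec,
      fun u => Units.ext (IsUnit.unit_spec _)⟩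

lemma nonunit_helper {x : R} (h2 : IsUnit (2 : R)) (hx : ¬ IsUnit x) : IsUnit (2 - x) := by
  by_contra h
  have h' := IsLocalRing.nonunits_add (mem_nonunits_iff.mpr h) (mem_nonunits_iff.mpr hx)
  rw [sub_add_cancel] at h'
  exact mem_nonunits_iff.mp h' h2

lemma card_R_split : Nat.card R = Nat.card Rˣ + Nat.card {x : R // ¬ IsUnit x} := by
  rw [← card_isUnit (R := R)]
  exact card_split_univ _ _ (fun x => em _) (fun x h h' => h' h)

lemma card_pairs : Nat.card R * Nat.card R
    = Nat.card Rˣ * Nat.card Rˣ + Nat.card {p : R × R // ¬ IsUnit (p.1 * p.2)} := by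
  have h1 : Nat.card (R × R) = Nat.card {p : R × R // IsUnit (p.1 * p.2)}
      + Nat.card {p : R × R // ¬ IsUnit (p.1 * p.2)} :=
    card_split_univ _ _ (fun x => em _) (fun x h h' => h' h)
  have h2 : Nat.card {p : R × R // IsUnit (p.1 * p.2)} = Nat.card (Rˣ × Rˣ) := by
    refine (Nat.card_eq_of_bijective
      (fun (p : Rˣ × Rˣ) => (⟨(p.1, p.2), (p.1.isUnit.mul p.2.isUnit)⟩ :
        {p : R × R // IsUnit (p.1 * p.2)})) ⟨?_, ?_⟩).symm
    · rintro ⟨u, v⟩ ⟨u', v'⟩ h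
      have h1 : (u : R) = u' := congrArg (fun z => z.1.1) h
      have h2 : (v : R) = v' := congrArg (fun z => z.1.2) h
      exact Prod.ext (Units.ext h1) (Units.ext h2)
    · rintro ⟨⟨b, c⟩, h⟩
      have hb := isUnit_of_mul_isUnit_left h
      have hc := isUnit_of_mul_isUnit_right h
      exact ⟨(hb.unit, hc.unit), Subtype.ext (Prod.ext hb.unit_spec hc.unit_spec)⟩
  rw [← Nat.card_prod, ← Nat.card_prod, h1, h2]

lemma card_shift (t : R) :
    Nat.card {a : R // ¬ IsUnit (t - a)} = Nat.card {x : R // ¬ IsUnit x} := by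
  refine (Nat.card_eq_of_bijective
    (fun (x : {x : R // ¬ IsUnit x}) => (⟨t - x.1, by simpa using x.2⟩ :
      {a : R // ¬ IsUnit (t - a)})) ⟨?_, ?_⟩).symm
  · rintro ⟨x, hx⟩ ⟨y, hy⟩ h
    have hxy : t - x = t - y := congrArg Subtype.val h
    exact Subtype.ext (sub_right_inj.mp hxy)
  · rintro ⟨a, ha⟩
    exact ⟨⟨t - a, by simpa using ha⟩, Subtype.ext (by ring)⟩

lemma card_shift' :
    Nat.card {a : R // ¬ IsUnit (1 + a)} = Nat.card {x : R // ¬ IsUnit x} := by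
  rw [← card_shift (1 : R)]
  refine Nat.card_congr ⟨fun x => ⟨-x.1, by simpa using x.2⟩, fun x => ⟨-x.1, by simpa [← sub_eq_add_neg] using x.2⟩,
    fun x => Subtype.ext (neg_neg _), fun x => Subtype.ext (neg_neg _)⟩

lemma card_index_split (h2 : IsUnit (2 : R)) :
    Nat.card R = Nat.card {x : R // ¬ IsUnit x} + (Nat.card {x : R // ¬ IsUnit x}
      + Nat.card {a : R // IsUnit (1 - a) ∧ IsUnit (1 + a)}) := by
  have key : ∀ a : R, ¬ IsUnit (1 - a) → ¬ IsUnit (1 + a) → False := by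
    intro a h h'
    have hsum := IsLocalRing.nonunits_add (mem_nonunits_iff.mpr h) (mem_nonunits_iff.mpr h')
    have : (1 - a) + (1 + a) = 2 := by ring
    rw [this] at hsum
    exact mem_nonunits_iff.mp hsum h2
  have h1 : Nat.card R = Nat.card {a : R // ¬ IsUnit (1 - a)}
      + Nat.card {a : R // ¬ IsUnit (1 + a) ∨ (IsUnit (1 - a) ∧ IsUnit (1 + a))} := by
    refine card_split_univ _ _ (fun a => ?_) (fun a h h' => ?_)
    · by_cases hu : IsUnit (1 - a)
      · by_cases hv : IsUnit (1 + a)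
        · exact Or.inr (Or.inr ⟨hu, hv⟩)
        · exact Or.inr (Or.inl hv)
      · exact Or.inl hu
    · rcases h' with h' | h'
      · exact key a h h'
      · exact h h'.1
  have h2' : Nat.card {a : R // ¬ IsUnit (1 + a) ∨ (IsUnit (1 - a) ∧ IsUnit (1 + a))}
      = Nat.card {a : R // ¬ IsUnit (1 + a)}
        + Nat.card {a : R // IsUnit (1 - a) ∧ IsUnit (1 + a)} := by
    refine card_split _ _ _ (fun a => Iff.rfl) (fun a h h' => h h'.2)
  rw [h1, h2', card_shift (1 : R), card_shift']


lemma card_S1 (h2 : IsUnit (2 : R)) :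
    Nat.card {p : R × R × R // p.1 ^ 2 + p.2.1 * p.2.2 = 1 ∧ ¬ IsUnit (1 - p.1)}
      = Nat.card {p : R × R // ¬ IsUnit (p.1 * p.2)} := by
  refine (Nat.card_eq_of_bijective (fun p =>
    (⟨(1 - p.1.1 * p.1.2, p.1.1, p.1.2 * (2 - p.1.1 * p.1.2)), by ring, by simpa using p.2⟩ :
      {p : R × R × R // p.1 ^ 2 + p.2.1 * p.2.2 = 1 ∧ ¬ IsUnit (1 - p.1)})) ⟨?_, ?_⟩).symm
  · rintro ⟨⟨b, c⟩, h⟩ ⟨⟨b', c'⟩, h'⟩ heq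
    have e1 : 1 - b * c = 1 - b' * c' := congrArg (fun z => z.1.1) heq
    have e2 : b = b' := congrArg (fun z => z.1.2.1) heq
    have e3 : c * (2 - b * c) = c' * (2 - b' * c') := congrArg (fun z => z.1.2.2) heq
    have e4 : b * c = b' * c' := by linear_combination -e1
    have hu : IsUnit (2 - b * c) := nonunit_helper h2 h
    refine Subtype.ext (Prod.ext e2 ?_)
    rw [← e4] at e3
    exact hu.mul_right_cancel e3
  · rintro ⟨⟨a, b, c⟩, heq, hna⟩
    have heq' : a ^ 2 + b * c = 1 := heq
    have h1a : IsUnit (1 + a) := by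
      have : (2 : R) - (1 - a) = 1 + a := by ring
      rw [← this]; exact nonunit_helper h2 hna
    obtain ⟨v, hv⟩ := h1a.exists_right_inv
    have hbc : b * c = (1 - a) * (1 + a) := by linear_combination heq'
    have hbcv : b * (c * v) = 1 - a := by
      rw [← mul_assoc, hbc, mul_assoc, hv, mul_one]
    refine ⟨⟨(b, c * v), by rw [hbcv]; simpa using hna⟩, Subtype.ext ?_⟩
    refine Prod.ext ?_ (Prod.ext rfl ?_)
    · show 1 - b * (c * v) = a
      rw [hbcv]; ring
    · show (c * v) * (2 - b * (c * v)) = c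
      rw [hbcv]
      have : (2 : R) - (1 - a) = 1 + a := by ring
      rw [this, mul_assoc, mul_comm v _, ← mul_assoc, mul_assoc, hv, mul_one]

lemma card_S2 (h2 : IsUnit (2 : R)) :
    Nat.card {p : R × R × R // p.1 ^ 2 + p.2.1 * p.2.2 = 1 ∧ ¬ IsUnit (1 + p.1)}
      = Nat.card {p : R × R // ¬ IsUnit (p.1 * p.2)} := by
  rw [← card_S1 h2]
  refine Nat.card_congr ⟨fun p => ⟨(-p.1.1, p.1.2.1, p.1.2.2), by
      obtain ⟨h1, hh2⟩ := p.2
      exact ⟨by rw [neg_pow]; simpa using h1, by rwa [sub_neg_eq_add]⟩⟩,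
    fun p => ⟨(-p.1.1, p.1.2.1, p.1.2.2), by
      obtain ⟨h1, hh2⟩ := p.2
      exact ⟨by rw [neg_pow]; simpa using h1, by rwa [← sub_eq_add_neg]⟩⟩,
    fun p => Subtype.ext (by simp), fun p => Subtype.ext (by simp)⟩

lemma card_S3 :
    Nat.card {p : R × R × R // p.1 ^ 2 + p.2.1 * p.2.2 = 1 ∧ (IsUnit (1 - p.1) ∧ IsUnit (1 + p.1))}
      = Nat.card {a : R // IsUnit (1 - a) ∧ IsUnit (1 + a)} * Nat.card Rˣ := by
  rw [← Nat.card_prod]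
  refine (Nat.card_eq_of_bijective (fun (z : {a : R // IsUnit (1 - a) ∧ IsUnit (1 + a)} × Rˣ) =>
    (⟨(z.1.1, (z.2 : R), (↑(z.2⁻¹) : R) * (1 - z.1.1 ^ 2)),
      ⟨by show z.1.1 ^ 2 + (z.2 : R) * ((↑(z.2⁻¹) : R) * (1 - z.1.1 ^ 2)) = 1
          rw [Units.mul_inv_cancel_left]; ring, z.1.2⟩⟩ :
      {p : R × R × R // p.1 ^ 2 + p.2.1 * p.2.2 = 1 ∧ (IsUnit (1 - p.1) ∧ IsUnit (1 + p.1))}))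
    ⟨?_, ?_⟩).symm
  · rintro ⟨⟨a, ha⟩, u⟩ ⟨⟨a', ha'⟩, u'⟩ heq
    have e1 : a = a' := congrArg (fun z => z.1.1) heq
    have e2 : (u : R) = u' := congrArg (fun z => z.1.2.1) heq
    exact Prod.ext (Subtype.ext e1) (Units.ext e2)
  · rintro ⟨⟨a, b, c⟩, heq, ha⟩
    have heq' : a ^ 2 + b * c = 1 := heq
    have hbc : b * c = (1 - a) * (1 + a) := by linear_combination heq'
    have hb : IsUnit b :=
      isUnit_of_mul_isUnit_left (x := b) (y := c) (by rw [hbc]; exact ha.1.mul ha.2)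
    refine ⟨(⟨a, ha⟩, hb.unit), Subtype.ext (Prod.ext rfl (Prod.ext hb.unit_spec ?_))⟩
    show (↑(hb.unit⁻¹) : R) * (1 - a ^ 2) = c
    have h5 : (1 : R) - a ^ 2 = (hb.unit : R) * c := by rw [hb.unit_spec]; linear_combination -heq'
    rw [h5, Units.inv_mul_cancel_left]

lemma card_S (h2 : IsUnit (2 : R)) :
    Nat.card {p : R × R × R // p.1 ^ 2 + p.2.1 * p.2.2 = 1}
      = Nat.card {p : R × R // ¬ IsUnit (p.1 * p.2)}
        + (Nat.card {p : R × R // ¬ IsUnit (p.1 * p.2)}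
          + Nat.card {a : R // IsUnit (1 - a) ∧ IsUnit (1 + a)} * Nat.card Rˣ) := by
  have key : ∀ a : R, ¬ IsUnit (1 - a) → ¬ IsUnit (1 + a) → False := by
    intro a h h'
    have hsum := IsLocalRing.nonunits_add (mem_nonunits_iff.mpr h) (mem_nonunits_iff.mpr h')
    have he : (1 - a) + (1 + a) = 2 := by ring
    rw [he] at hsum
    exact mem_nonunits_iff.mp hsum h2
  have h1 := card_split (α := R × R × R)
    (fun p => p.1 ^ 2 + p.2.1 * p.2.2 = 1)
    (fun p => p.1 ^ 2 + p.2.1 * p.2.2 = 1 ∧ ¬ IsUnit (1 - p.1))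
    (fun p => p.1 ^ 2 + p.2.1 * p.2.2 = 1 ∧ (¬ IsUnit (1 + p.1) ∨ (IsUnit (1 - p.1) ∧ IsUnit (1 + p.1))))
    (fun p => ⟨fun h => ?_, fun h => h.elim (fun h => h.1) (fun h => h.1)⟩)
    (fun p hq hs => ?_)
  rotate_left
  · by_cases hu : IsUnit (1 - p.1)
    · by_cases hv : IsUnit (1 + p.1)
      · exact Or.inr ⟨h, Or.inr ⟨hu, hv⟩⟩
      · exact Or.inr ⟨h, Or.inl hv⟩
    · exact Or.inl ⟨h, hu⟩
  · rcases hs.2 with h' | h'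
    · exact key p.1 hq.2 h'
    · exact hq.2 h'.1
  have h2' := card_split (α := R × R × R)
    (fun p => p.1 ^ 2 + p.2.1 * p.2.2 = 1 ∧ (¬ IsUnit (1 + p.1) ∨ (IsUnit (1 - p.1) ∧ IsUnit (1 + p.1))))
    (fun p => p.1 ^ 2 + p.2.1 * p.2.2 = 1 ∧ ¬ IsUnit (1 + p.1))
    (fun p => p.1 ^ 2 + p.2.1 * p.2.2 = 1 ∧ (IsUnit (1 - p.1) ∧ IsUnit (1 + p.1)))
    (fun p => ⟨fun h => h.2.elim (fun h' => Or.inl ⟨h.1, h'⟩) (fun h' => Or.inr ⟨h.1, h'⟩),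
      fun h => h.elim (fun h => ⟨h.1, Or.inl h.2⟩) (fun h => ⟨h.1, Or.inr h.2⟩)⟩)
    (fun p hq hs => hq.2 hs.2.2)
  rw [h1, h2', card_S1 h2, card_S2 h2, card_S3]

end Count

section MatrixPart

variable {R : Type} [CommRing R] [IsLocalRing R] [Finite R]

def unitsSqEquiv {M : Type*} [Monoid M] : {u : Mˣ // u ^ 2 = 1} ≃ {a : M // a ^ 2 = 1} where
  toFun u := ⟨↑u.1, by rw [← Units.val_pow_eq_pow_val, u.2, Units.val_one]⟩
  invFun a := ⟨⟨a.1, a.1, by rw [← sq]; exact a.2, by rw [← sq]; exact a.2⟩,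
    Units.ext (by rw [Units.val_pow_eq_pow_val]; simpa using a.2)⟩
  left_inv u := Subtype.ext (Units.ext rfl)
  right_inv a := Subtype.ext rfl

lemma neg_nonunit {x : R} (hx : ¬ IsUnit x) : ¬ IsUnit (-x) := fun h => hx (by simpa using h.neg)

lemma invol_iff (h2 : IsUnit (2 : R)) (A : Matrix (Fin 2) (Fin 2) R) :
    A ^ 2 = 1 ↔ ((A = 1 ∨ A = -1) ∨
      (A 1 1 = - A 0 0 ∧ (A 0 0) ^ 2 + A 0 1 * A 1 0 = 1)) := by
  constructor
  · intro h
    rw [pow_two] at h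
    have hent : ∀ i j, (A * A) i j = (1 : Matrix (Fin 2) (Fin 2) R) i j := fun i j => by rw [h]
    have h00 := hent 0 0
    have h01 := hent 0 1
    have h10 := hent 1 0
    have h11 := hent 1 1
    rw [Matrix.mul_apply, Fin.sum_univ_two, Matrix.one_apply_eq] at h00 h11
    rw [Matrix.mul_apply, Fin.sum_univ_two, Matrix.one_apply_ne (by decide)] at h01 h10
    by_cases ht : IsUnit (A 0 0 + A 1 1)
    · have hb : A 0 1 = 0 := by
        have := ht.mul_left_cancel (b := A 0 1) (c := 0) (by linear_combination h01)
        exact this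
      have hc : A 1 0 = 0 := by
        exact ht.mul_left_cancel (b := A 1 0) (c := 0) (by linear_combination h10)
      have had : A 0 0 = A 1 1 :=
        ht.mul_left_cancel (b := A 0 0) (c := A 1 1) (by linear_combination h00 - h11)
      have ha2 : A 0 0 * A 0 0 = 1 := by linear_combination h00 - A 1 0 * hb
      by_cases h1 : IsUnit (A 0 0 - 1)
      · have hneg : A 0 0 + 1 = 0 :=
          h1.mul_left_cancel (b := A 0 0 + 1) (c := 0) (by linear_combination ha2)
        have haval : A 0 0 = -1 := by linear_combination hneg
        left; right
        rw [Matrix.eta_fin_two A, hb, hc, haval, ← had, haval]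
        ext i j
        fin_cases i <;> fin_cases j <;> simp
      · have h1' : IsUnit (A 0 0 + 1) := by
          by_contra hx
          have hsum := IsLocalRing.nonunits_add (mem_nonunits_iff.mpr hx)
            (mem_nonunits_iff.mpr (neg_nonunit h1))
          have he : (A 0 0 + 1) + -(A 0 0 - 1) = 2 := by ring
          rw [he] at hsum
          exact mem_nonunits_iff.mp hsum h2
        have hneg : A 0 0 - 1 = 0 :=
          h1'.mul_left_cancel (b := A 0 0 - 1) (c := 0) (by linear_combination ha2)
        have haval : A 0 0 = 1 := by linear_combination hneg
        left; left
        rw [Matrix.eta_fin_two A, hb, hc, haval, ← had, haval]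
        ext i j
        fin_cases i <;> fin_cases j <;> simp
    · have htb : (A 0 0 + A 1 1) * A 0 1 = 0 := by linear_combination h01
      have htad : (A 0 0 + A 1 1) * A 0 0 = (A 0 0 + A 1 1) * A 1 1 := by
        linear_combination h00 - h11
      have he2 : (A 0 0 + A 1 1) * (A 0 0 + A 1 1) = 2 * ((A 0 0 + A 1 1) * A 0 0) := by
        linear_combination -htad
      have he3 : (A 0 0 + A 1 1)
          = A 0 0 * ((A 0 0 + A 1 1) * A 0 0) + A 1 0 * ((A 0 0 + A 1 1) * A 0 1) := by
        linear_combination (-(A 0 0 + A 1 1)) * h00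
      rw [htb, mul_zero, add_zero] at he3
      have hkey : (A 0 0 + A 1 1) * (2 - A 0 0 * (A 0 0 + A 1 1)) = 0 := by
        linear_combination 2 * he3 - A 0 0 * he2
      have hu : IsUnit (2 - A 0 0 * (A 0 0 + A 1 1)) :=
        nonunit_helper h2 (fun hy => ht (isUnit_of_mul_isUnit_right hy))
      have ht0 : A 0 0 + A 1 1 = 0 :=
        hu.mul_right_cancel (b := 2 - A 0 0 * (A 0 0 + A 1 1)) (by rw [hkey, zero_mul])
      right
      exact ⟨by linear_combination ht0, by linear_combination h00⟩
  · rintro ((rfl | rfl) | ⟨hd, heq⟩)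
    · rw [one_pow]
    · rw [neg_one_sq]
    · rw [pow_two]
      ext i j
      fin_cases i <;> fin_cases j
      · show (A * A) 0 0 = (1 : Matrix (Fin 2) (Fin 2) R) 0 0
        rw [Matrix.mul_apply, Fin.sum_univ_two, Matrix.one_apply_eq]
        linear_combination heq
      · show (A * A) 0 1 = (1 : Matrix (Fin 2) (Fin 2) R) 0 1
        rw [Matrix.mul_apply, Fin.sum_univ_two, Matrix.one_apply_ne (by decide)]
        linear_combination A 0 1 * hd
      · show (A * A) 1 0 = (1 : Matrix (Fin 2) (Fin 2) R) 1 0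
        rw [Matrix.mul_apply, Fin.sum_univ_two, Matrix.one_apply_ne (by decide)]
        linear_combination A 1 0 * hd
      · show (A * A) 1 1 = (1 : Matrix (Fin 2) (Fin 2) R) 1 1
        rw [Matrix.mul_apply, Fin.sum_univ_two, Matrix.one_apply_eq]
        linear_combination heq + (A 1 1 - A 0 0) * hd

lemma one_ne_negone (h2 : IsUnit (2 : R)) : (1 : R) ≠ -1 := by
  intro h
  have h20 : (2 : R) = 0 := by linear_combination h
  rw [h20] at h2
  exact one_ne_zero ((isUnit_zero_iff.mp h2).symm)

lemma card_matrix_invol (h2 : IsUnit (2 : R)) :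
    Nat.card {A : Matrix (Fin 2) (Fin 2) R // A ^ 2 = 1}
      = 2 + Nat.card {p : R × R × R // p.1 ^ 2 + p.2.1 * p.2.2 = 1} := by
  have hn := one_ne_negone h2
  have hdisj : ∀ A : Matrix (Fin 2) (Fin 2) R, (A = 1 ∨ A = -1) →
      (A 1 1 = - A 0 0 ∧ (A 0 0) ^ 2 + A 0 1 * A 1 0 = 1) → False := by
    rintro A (rfl | rfl) ⟨hd, -⟩
    · rw [Matrix.one_apply_eq, Matrix.one_apply_eq] at hd
      exact hn hd
    · rw [Matrix.neg_apply, Matrix.neg_apply, Matrix.one_apply_eq, Matrix.one_apply_eq] at hd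
      exact hn (by linear_combination -hd)
  have h1 := card_split (fun A : Matrix (Fin 2) (Fin 2) R => A ^ 2 = 1)
    (fun A => A = 1 ∨ A = -1)
    (fun A => A 1 1 = - A 0 0 ∧ (A 0 0) ^ 2 + A 0 1 * A 1 0 = 1)
    (invol_iff h2) hdisj
  have h2' : Nat.card {A : Matrix (Fin 2) (Fin 2) R // A = 1 ∨ A = -1} = 2 := by
    rw [card_split (fun A : Matrix (Fin 2) (Fin 2) R => A = 1 ∨ A = -1)
      (fun A => A = 1) (fun A => A = -1) (fun A => Iff.rfl)
      (by rintro A rfl h; exact hn (by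
        have := Matrix.ext_iff.mpr h 0 0
        rwa [Matrix.one_apply_eq, Matrix.neg_apply, Matrix.one_apply_eq] at this)),
      card_eq_singleton, card_eq_singleton]
  have h3 : Nat.card {A : Matrix (Fin 2) (Fin 2) R //
      A 1 1 = - A 0 0 ∧ (A 0 0) ^ 2 + A 0 1 * A 1 0 = 1}
      = Nat.card {p : R × R × R // p.1 ^ 2 + p.2.1 * p.2.2 = 1} := by
    refine (Nat.card_eq_of_bijective (fun (p : {p : R × R × R // p.1 ^ 2 + p.2.1 * p.2.2 = 1}) =>
      (⟨!![p.1.1, p.1.2.1; p.1.2.2, -p.1.1], by simp, by simpa using p.2⟩ :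
        {A : Matrix (Fin 2) (Fin 2) R //
          A 1 1 = - A 0 0 ∧ (A 0 0) ^ 2 + A 0 1 * A 1 0 = 1})) ⟨?_, ?_⟩).symm
    · rintro ⟨⟨a, b, c⟩, hp⟩ ⟨⟨a', b', c'⟩, hp'⟩ heq
      have e := Matrix.ext_iff.mpr (congrArg Subtype.val heq)
      have e1 := e 0 0
      have e2 := e 0 1
      have e3 := e 1 0
      simp at e1 e2 e3
      exact Subtype.ext (Prod.ext e1 (Prod.ext e2 e3))
    · rintro ⟨A, hd, heq⟩
      refine ⟨⟨(A 0 0, A 0 1, A 1 0), heq⟩, Subtype.ext ?_⟩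
      show !![A 0 0, A 0 1; A 1 0, -(A 0 0)] = A
      conv_rhs => rw [Matrix.eta_fin_two A]
      rw [hd]
  rw [h1, h2', h3]

lemma card_GL_invol (h2 : IsUnit (2 : R)) :
    Nat.card {g : GL (Fin 2) R // g ^ 2 = 1}
      = 2 + Nat.card {p : R × R × R // p.1 ^ 2 + p.2.1 * p.2.2 = 1} := by
  rw [Nat.card_congr (unitsSqEquiv (M := Matrix (Fin 2) (Fin 2) R))]
  exact card_matrix_invol h2

end MatrixPart

lemma card_GL_invol_final {R : Type} [CommRing R] [IsLocalRing R] [Finite R]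
    (h2 : IsUnit (2 : R)) (q m : ℕ)
    (hN : Nat.card R = q ^ (m + 1))
    (hNU : Nat.card {x : R // ¬ IsUnit x} = q ^ m) :
    Nat.card {g : GL (Fin 2) R // g ^ 2 = 1} = (q + 1) * q ^ (2 * (m + 1) - 1) + 2 := by
  rw [card_GL_invol h2, card_S h2]
  have e1 := card_pairs (R := R)
  have e2 := card_R_split (R := R)
  have e3 := card_index_split h2
  rw [hN] at e1 e2 e3
  rw [hNU] at e2 e3
  have h21 : 2 * (m + 1) - 1 = 2 * m + 1 := by omega
  rw [h21]
  have hU : (Nat.card Rˣ : ℤ) = (q : ℤ) ^ (m + 1) - (q : ℤ) ^ m := by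
    have := congrArg (fun n : ℕ => (n : ℤ)) e2
    push_cast at this
    linarith
  have hT : (Nat.card {p : R × R // ¬ IsUnit (p.1 * p.2)} : ℤ)
      = ((q : ℤ) ^ (m + 1)) ^ 2 - ((Nat.card Rˣ : ℤ)) ^ 2 := by
    have := congrArg (fun n : ℕ => (n : ℤ)) e1
    push_cast at this
    nlinarith [this]
  have hK : (Nat.card {a : R // IsUnit (1 - a) ∧ IsUnit (1 + a)} : ℤ)
      = (q : ℤ) ^ (m + 1) - 2 * (q : ℤ) ^ m := by
    have := congrArg (fun n : ℕ => (n : ℤ)) e3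
    push_cast at this
    linarith
  have final : ((2 + (Nat.card {p : R × R // ¬ IsUnit (p.1 * p.2)}
      + (Nat.card {p : R × R // ¬ IsUnit (p.1 * p.2)}
        + Nat.card {a : R // IsUnit (1 - a) ∧ IsUnit (1 + a)} * Nat.card Rˣ)) : ℕ) : ℤ)
      = (((q + 1) * q ^ (2 * m + 1) + 2 : ℕ) : ℤ) := by
    push_cast
    rw [hT, hK, hU]
    ring
  exact_mod_cast final

section DVRCard

open IsLocalRing

variable {O : Type} [CommRing O] [IsDomain O] [IsDiscreteValuationRing O]
variable [Finite (IsLocalRing.ResidueField O)]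

lemma pow_ne_top (π : O) (hirr : Irreducible π) (k : ℕ) (hk : 1 ≤ k) :
    Ideal.span {π} ^ k ≠ ⊤ := by
  intro h
  have h1 : (1 : O) ∈ Ideal.span {π} ^ k := h ▸ Submodule.mem_top
  have h2 : Ideal.span {π} ^ k ≤ Ideal.span {π} := by
    calc Ideal.span {π} ^ k ≤ Ideal.span {π} ^ 1 := Ideal.pow_le_pow_right hk
    _ = Ideal.span {π} := pow_one _
  have h3 : π ∣ 1 := Ideal.mem_span_singleton.mp (h2 h1)
  exact hirr.not_isUnit (isUnit_of_dvd_one h3)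

lemma finite_and_card (π : O) (hirr : Irreducible π) (n : ℕ) :
    Finite (O ⧸ Ideal.span {π} ^ n) ∧
      Nat.card (O ⧸ Ideal.span {π} ^ n) = Nat.card (IsLocalRing.ResidueField O) ^ n := by
  have hπ0 : π ≠ 0 := hirr.ne_zero
  have hM : IsLocalRing.maximalIdeal O = Ideal.span {π} :=
    (IsDiscreteValuationRing.irreducible_iff_uniformizer π).mp hirr
  have residEquiv : (O ⧸ Ideal.span {π}) ≃+* IsLocalRing.ResidueField O :=
    Ideal.quotEquivOfEq hM.symm
  haveI hfin1 : Finite (O ⧸ Ideal.span {π}) := Finite.of_equiv _ residEquiv.symm.toEquiv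
  have hcard1 : Nat.card (O ⧸ Ideal.span {π}) = Nat.card (IsLocalRing.ResidueField O) :=
    Nat.card_congr residEquiv.toEquiv
  induction n with
  | zero =>
    have hsub : Subsingleton (O ⧸ Ideal.span {π} ^ 0) := by
      rw [pow_zero, Ideal.one_eq_top]
      exact Ideal.Quotient.subsingleton_iff.mpr rfl
    exact ⟨Finite.of_subsingleton, by
      rw [pow_zero]
      exact Nat.card_eq_one_iff_unique.mpr ⟨hsub, ⟨0⟩⟩⟩
  | succ n ih =>
    obtain ⟨hfin, hcard⟩ := ih
    let F : O →ₗ[O] O ⧸ Ideal.span {π} ^ (n + 1) := (π ^ n) • (Ideal.span {π} ^ (n + 1)).mkQ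
    have hF : ∀ y : O, F y = Ideal.Quotient.mk (Ideal.span {π} ^ (n + 1)) (π ^ n * y) := by
      intro y
      show (π ^ n) • ((Ideal.span {π} ^ (n+1)).mkQ y) = _
      rw [Submodule.mkQ_apply, ← Submodule.Quotient.mk_smul, smul_eq_mul]
      rfl
    have hker : LinearMap.ker F = Ideal.span {π} := by
      ext y
      rw [LinearMap.mem_ker, hF, Ideal.Quotient.eq_zero_iff_mem,
        Ideal.span_singleton_pow, Ideal.mem_span_singleton, Ideal.mem_span_singleton]
      rw [pow_succ, mul_dvd_mul_iff_left (pow_ne_zero n hπ0)]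
    let φ : (O ⧸ Ideal.span {π} ^ (n + 1)) →+* O ⧸ Ideal.span {π} ^ n :=
      Ideal.Quotient.factor (Ideal.pow_le_pow_right n.le_succ)
    have hφ : ∀ z : O, φ (Ideal.Quotient.mk _ z) = Ideal.Quotient.mk (Ideal.span {π} ^ n) z := fun z =>
      Ideal.Quotient.factor_mk _ z
    have hsurj : Function.Surjective φ := by
      intro x
      obtain ⟨z, rfl⟩ := Ideal.Quotient.mk_surjective x
      exact ⟨Ideal.Quotient.mk _ z, hφ z⟩
    have hrange : ∀ x : O ⧸ Ideal.span {π} ^ (n + 1), x ∈ LinearMap.range F ↔ φ x = 0 := by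
      intro x
      obtain ⟨z, rfl⟩ := Ideal.Quotient.mk_surjective x
      rw [hφ, Ideal.Quotient.eq_zero_iff_mem]
      have hziff : z ∈ Ideal.span {π} ^ n ↔ π ^ n ∣ z := by
        rw [Ideal.span_singleton_pow, Ideal.mem_span_singleton]
      rw [hziff]
      constructor
      · rintro ⟨y, hy⟩
        rw [hF] at hy
        have hz : π ^ n * y - z ∈ Ideal.span {π} ^ (n + 1) := Ideal.Quotient.eq.mp hy
        have h4 : π ^ n ∣ π ^ n * y - z := by
          have h5 : π ^ (n+1) ∣ π ^ n * y - z := by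
            rwa [Ideal.span_singleton_pow, Ideal.mem_span_singleton] at hz
          exact dvd_trans (pow_dvd_pow π n.le_succ) h5
        have h6 : π ^ n ∣ π ^ n * y := Dvd.intro y rfl
        have := dvd_sub h6 h4
        simpa using this
      · rintro ⟨y, rfl⟩
        exact ⟨y, (hF y).trans rfl⟩
    -- kernel subgroup
    set A : AddSubgroup (O ⧸ Ideal.span {π} ^ (n + 1)) := φ.toAddMonoidHom.ker with hA
    have ekerA : (O ⧸ Ideal.span {π}) ≃ A := by
      refine ((Submodule.quotEquivOfEq (Ideal.span {π}) (LinearMap.ker F) hker.symm).trans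
        (LinearMap.quotKerEquivRange F)).toEquiv.trans (Equiv.subtypeEquivRight ?_)
      intro x
      rw [hrange x]
      exact Iff.rfl
    haveI hfinA : Finite A := Finite.of_equiv _ ekerA
    have equot : ((O ⧸ Ideal.span {π} ^ (n + 1)) ⧸ A) ≃ (O ⧸ Ideal.span {π} ^ n) :=
      (QuotientAddGroup.quotientKerEquivOfSurjective φ.toAddMonoidHom hsurj).toEquiv
    haveI hfinquot : Finite ((O ⧸ Ideal.span {π} ^ (n + 1)) ⧸ A) := Finite.of_equiv _ equot.symm
    haveI hfinall : Finite (O ⧸ Ideal.span {π} ^ (n + 1)) := Finite.of_addSubgroup_quotient (H := A)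
    refine ⟨hfinall, ?_⟩
    rw [AddSubgroup.card_eq_card_quotient_mul_card_addSubgroup A, Nat.card_congr equot,
      Nat.card_congr ekerA.symm, hcard, hcard1, pow_succ]

lemma card_nonunits (π : O) (hirr : Irreducible π) (m : ℕ) :
    Nat.card {x : O ⧸ Ideal.span {π} ^ (m + 1) // ¬ IsUnit x}
      = Nat.card (IsLocalRing.ResidueField O) ^ m := by
  have hπ0 : π ≠ 0 := hirr.ne_zero
  have hM : IsLocalRing.maximalIdeal O = Ideal.span {π} :=
    (IsDiscreteValuationRing.irreducible_iff_uniformizer π).mp hirr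
  let F : O →ₗ[O] O ⧸ Ideal.span {π} ^ (m + 1) := π • (Ideal.span {π} ^ (m + 1)).mkQ
  have hF : ∀ y : O, F y = Ideal.Quotient.mk (Ideal.span {π} ^ (m + 1)) (π * y) := by
    intro y
    show π • ((Ideal.span {π} ^ (m+1)).mkQ y) = _
    rw [Submodule.mkQ_apply, ← Submodule.Quotient.mk_smul, smul_eq_mul]
    rfl
  have hker : LinearMap.ker F = Ideal.span {π} ^ m := by
    ext y
    rw [LinearMap.mem_ker, hF, Ideal.Quotient.eq_zero_iff_mem,
      Ideal.span_singleton_pow, Ideal.span_singleton_pow, Ideal.mem_span_singleton,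
      Ideal.mem_span_singleton]
    rw [pow_succ', mul_dvd_mul_iff_left hπ0]
  have hrange : ∀ x : O ⧸ Ideal.span {π} ^ (m + 1), x ∈ LinearMap.range F ↔ ¬ IsUnit x := by
    intro x
    obtain ⟨z, rfl⟩ := Ideal.Quotient.mk_surjective x
    constructor
    · rintro ⟨y, hy⟩ hu
      rw [hF] at hy
      rcases hu with ⟨u, hu⟩
      obtain ⟨w, hw⟩ := Ideal.Quotient.mk_surjective (↑u⁻¹ : O ⧸ Ideal.span {π} ^ (m + 1))
      have h1 : Ideal.Quotient.mk (Ideal.span {π} ^ (m + 1)) (z * w) = 1 := by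
        rw [_root_.map_mul, ← hu, hw, Units.mul_inv]
      have h2 : z * w - 1 ∈ Ideal.span {π} ^ (m + 1) := by
        have := Ideal.Quotient.eq.mp (h1.trans (_root_.map_one (Ideal.Quotient.mk (Ideal.span {π} ^ (m+1)))).symm)
        simpa using this
      have hle : Ideal.span {π} ^ (m + 1) ≤ Ideal.span {π} := by
        calc Ideal.span {π} ^ (m + 1) ≤ Ideal.span {π} ^ 1 := Ideal.pow_le_pow_right (Nat.one_le_iff_ne_zero.mpr (Nat.succ_ne_zero m))
        _ = Ideal.span {π} := pow_one _
      have h3 : π * y - z ∈ Ideal.span {π} := hle (Ideal.Quotient.eq.mp hy)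
      have h4 : z ∈ Ideal.span {π} := by
        have h5 : π * y ∈ Ideal.span {π} := Ideal.mem_span_singleton.mpr ⟨y, rfl⟩
        have := Submodule.sub_mem (Ideal.span {π}) h5 h3
        simpa using this
      have h6 : (1 : O) ∈ Ideal.span {π} := by
        have h7 : z * w ∈ Ideal.span {π} := Ideal.mul_mem_right _ _ h4
        have := Submodule.sub_mem (Ideal.span {π}) h7 (hle h2)
        simpa using this
      exact hirr.not_isUnit (isUnit_of_dvd_one (Ideal.mem_span_singleton.mp h6))
    · intro hu
      have hz : z ∈ Ideal.span {π} := by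
        by_contra hz
        have : IsUnit z := by
          rw [← IsLocalRing.notMem_maximalIdeal (R := O)]
          rw [hM]
          exact hz
        exact hu (RingHom.isUnit_map _ this)
      obtain ⟨y, rfl⟩ := Ideal.mem_span_singleton.mp hz
      exact ⟨y, (hF y).symm ▸ rfl⟩
  have e : (O ⧸ Ideal.span {π} ^ m) ≃ {x : O ⧸ Ideal.span {π} ^ (m + 1) // ¬ IsUnit x} :=
    ((Submodule.quotEquivOfEq (Ideal.span {π} ^ m) (LinearMap.ker F) hker.symm).trans
      (LinearMap.quotKerEquivRange F)).toEquiv.trans (Equiv.subtypeEquivRight hrange)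
  rw [← Nat.card_congr e, (finite_and_card π hirr m).2]

end DVRCard


theorem count_involutions_GL2
    (O : Type) [CommRing O] [IsDomain O] [IsDiscreteValuationRing O]
    [IsAdicComplete (IsLocalRing.maximalIdeal O) O]
    (π : O) (hπ : IsLocalRing.maximalIdeal O = Ideal.span {π})
    [Finite (IsLocalRing.ResidueField O)]
    (hodd : Odd (ringChar (IsLocalRing.ResidueField O)))
    (q : ℕ) (hq : Nat.card (IsLocalRing.ResidueField O) = q)
    (ℓ : ℕ) (hℓ : 1 ≤ ℓ) :
    Nat.card {g : GL (Fin 2) (O ⧸ Ideal.span {π} ^ ℓ) // g ^ 2 = 1} =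
      (q + 1) * q ^ (2 * ℓ - 1) + 2 := by
  have hirr : Irreducible π := (IsDiscreteValuationRing.irreducible_iff_uniformizer π).mpr hπ
  obtain ⟨m, rfl⟩ : ∃ m, ℓ = m + 1 := ⟨ℓ - 1, by omega⟩
  haveI hfin : Finite (O ⧸ Ideal.span {π} ^ (m + 1)) := (finite_and_card π hirr (m + 1)).1
  haveI hnt : Nontrivial (O ⧸ Ideal.span {π} ^ (m + 1)) :=
    Ideal.Quotient.nontrivial_iff.mpr (pow_ne_top π hirr (m + 1) (Nat.le_add_left 1 m))
  haveI hloc : IsLocalRing (O ⧸ Ideal.span {π} ^ (m + 1)) :=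
    IsLocalRing.of_surjective' (Ideal.Quotient.mk _) Ideal.Quotient.mk_surjective
  -- 2 is a unit
  have h2O : IsUnit (2 : O) := by
    rw [← IsLocalRing.notMem_maximalIdeal]
    intro hmem
    have h20 : (2 : IsLocalRing.ResidueField O) = 0 := by
      rw [← _root_.map_ofNat (IsLocalRing.residue O) 2]
      exact (IsLocalRing.residue_eq_zero_iff _).mpr hmem
    have hcast : ((2 : ℕ) : IsLocalRing.ResidueField O) = 0 := by push_cast; exact h20
    have hdvd : ringChar (IsLocalRing.ResidueField O) ∣ 2 := ringChar.dvd hcast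
    rcases (Nat.dvd_prime Nat.prime_two).mp hdvd with h1 | h1
    · have := CharP.cast_eq_zero (IsLocalRing.ResidueField O)
        (ringChar (IsLocalRing.ResidueField O))
      rw [h1] at this
      simpa using this
    · rw [h1] at hodd
      simp [Nat.odd_iff] at hodd
  have h2 : IsUnit (2 : O ⧸ Ideal.span {π} ^ (m + 1)) := by
    have := (Ideal.Quotient.mk (Ideal.span {π} ^ (m + 1))).isUnit_map h2O
    rwa [_root_.map_ofNat] at this
  have hN : Nat.card (O ⧸ Ideal.span {π} ^ (m + 1)) = q ^ (m + 1) := by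
    rw [(finite_and_card π hirr (m + 1)).2, hq]
  have hNU : Nat.card {x : O ⧸ Ideal.span {π} ^ (m + 1) // ¬ IsUnit x} = q ^ m := by
    rw [card_nonunits π hirr m, hq]
  exact card_GL_invol_final h2 q m hN hNU
end

section
/- Let ℓ ≥ 2, let ρ_{ℓ,ℓ−1}: GL₂(𝔬_ℓ) → GL₂(𝔬_{ℓ−1}) be the reduction homomorphism and K := ker(ρ_{ℓ,ℓ−1}). Let σ be an irreducible finite-dimensional complex representation of GL₂(𝔬_ℓ) such that every element of K acts in σ as a scalar operator (i.e., σ is non-regular). Then the character χ_σ is real-valued if and only if there exists an irreducible complex representation σ' of GL₂(𝔬_{ℓ−1}) with real-valued character such that σ ≅ σ' ∘ ρ_{ℓ,ℓ−1}. -/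
open Matrix

/-- Reduction map `O/(π)^ℓ → O/(π)^i` for `i ≤ ℓ`. -/
noncomputable def redq (O : Type) [CommRing O] (π : O) {i ℓ : ℕ} (h : i ≤ ℓ) :
    O ⧸ Ideal.span {π} ^ ℓ →+* O ⧸ Ideal.span {π} ^ i :=
  Ideal.Quotient.factor (Ideal.pow_le_pow_right h)

/-- Irreducibility of a complex representation. -/
def RepIrred {G V : Type} [Group G] [AddCommGroup V] [Module ℂ V]
    (σ : Representation ℂ G V) : Prop :=
  Nontrivial V ∧
    ∀ W : Submodule ℂ V, (∀ g : G, ∀ v ∈ W, σ g v ∈ W) → W = ⊥ ∨ W = ⊤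

lemma one_add_sq_zero_pow {R : Type*} [Ring R] (M : R) (hM : M * M = 0) (n : ℕ) :
    (1 + M) ^ n = 1 + n • M := by
  induction n with
  | zero => simp
  | succ n ih =>
      rw [pow_succ, ih, add_mul, mul_add, mul_add, one_mul, one_mul, mul_one,
        smul_mul_assoc, hM, smul_zero, add_zero, succ_nsmul]
      abel

theorem nonregular_real_characters_GL2
    (O : Type) [CommRing O] [IsDomain O] [IsDiscreteValuationRing O]
    [IsAdicComplete (IsLocalRing.maximalIdeal O) O]
    (π : O) (hπ : IsLocalRing.maximalIdeal O = Ideal.span {π})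
    [Finite (IsLocalRing.ResidueField O)]
    (hodd : Odd (ringChar (IsLocalRing.ResidueField O)))
    (ℓ : ℕ) (hℓ : 2 ≤ ℓ)
    (V : Type) [AddCommGroup V] [Module ℂ V] [FiniteDimensional ℂ V]
    (σ : Representation ℂ (GL (Fin 2) (O ⧸ Ideal.span {π} ^ ℓ)) V)
    (hirr : RepIrred σ)
    -- σ is non-regular: every element of K = ker(ρ_{ℓ,ℓ-1}) acts as a scalar
    (hnonreg : ∀ g ∈ (GeneralLinearGroup.map (redq O π (Nat.sub_le ℓ 1))).ker,
      ∃ c : ℂ, σ g = c • (LinearMap.id : V →ₗ[ℂ] V)) :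
    (∀ g, (LinearMap.trace ℂ V (σ g)).im = 0) ↔
      ∃ (n : ℕ) (σ' : Representation ℂ (GL (Fin 2) (O ⧸ Ideal.span {π} ^ (ℓ - 1)))
          (Fin n → ℂ)),
        RepIrred σ' ∧
        (∀ g', (LinearMap.trace ℂ (Fin n → ℂ) (σ' g')).im = 0) ∧
        ∃ e : V ≃ₗ[ℂ] (Fin n → ℂ), ∀ g v,
          e (σ g v) = σ' (GeneralLinearGroup.map (redq O π (Nat.sub_le ℓ 1)) g) (e v) := by
  haveI : Nontrivial V := hirr.1
  set f := redq O π (Nat.sub_le ℓ 1) with hfdef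
  set F := GeneralLinearGroup.map (n := Fin 2) f with hFdef
  set p := ringChar (IsLocalRing.ResidueField O) with hpdef
  -- basic facts about f
  have hfmk : ∀ a : O, f (Ideal.Quotient.mk _ a) = Ideal.Quotient.mk _ a := by
    intro a
    exact Ideal.Quotient.factor_mk _ a
  have hfzero : ∀ x, f x = 0 ↔ ∃ a ∈ Ideal.span {π} ^ (ℓ - 1), Ideal.Quotient.mk _ a = x := by
    intro x
    refine ⟨fun hx => ?_, fun hx => ?_⟩
    · obtain ⟨a, rfl⟩ := Ideal.Quotient.mk_surjective x
      rw [hfmk] at hx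
      exact ⟨a, Ideal.Quotient.eq_zero_iff_mem.mp hx, rfl⟩
    · obtain ⟨a, ha, rfl⟩ := hx
      rw [hfmk]
      exact Ideal.Quotient.eq_zero_iff_mem.mpr ha
  have hsq : ∀ x y, f x = 0 → f y = 0 → x * y = 0 := by
    intro x y hx hy
    obtain ⟨a, ha, rfl⟩ := (hfzero x).mp hx
    obtain ⟨b, hb, rfl⟩ := (hfzero y).mp hy
    rw [← _root_.map_mul]
    refine Ideal.Quotient.eq_zero_iff_mem.mpr ?_
    have h1 : a * b ∈ Ideal.span {π} ^ (ℓ - 1) * Ideal.span {π} ^ (ℓ - 1) :=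
      Ideal.mul_mem_mul ha hb
    rw [← pow_add] at h1
    exact Ideal.pow_le_pow_right (by omega) h1
  have hpmem : (p : O) ∈ Ideal.span {π} := by
    rw [← hπ]
    have : IsLocalRing.residue O (p : O) = 0 := by
      rw [map_natCast, hpdef, ringChar.Nat.cast_ringChar]
    exact Ideal.Quotient.eq_zero_iff_mem.mp this
  have hpker : ∀ x, f x = 0 → (p : O ⧸ Ideal.span {π} ^ ℓ) * x = 0 := by
    intro x hx
    obtain ⟨a, ha, rfl⟩ := (hfzero x).mp hx
    rw [← map_natCast (Ideal.Quotient.mk (Ideal.span {π} ^ ℓ)) p, ← _root_.map_mul]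
    refine Ideal.Quotient.eq_zero_iff_mem.mpr ?_
    have h1 : (p : O) * a ∈ Ideal.span {π} * Ideal.span {π} ^ (ℓ - 1) :=
      Ideal.mul_mem_mul hpmem ha
    rw [← pow_succ'] at h1
    have h2 : ℓ ≤ (ℓ - 1) + 1 := by omega
    exact Ideal.pow_le_pow_right h2 h1
  have hsurjf : Function.Surjective f := by
    intro y
    obtain ⟨a, rfl⟩ := Ideal.Quotient.mk_surjective y
    exact ⟨Ideal.Quotient.mk _ a, hfmk a⟩
  have hunit : ∀ x, IsUnit (f x) → IsUnit x := by
    intro x hx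
    obtain ⟨u, hu⟩ := hx
    obtain ⟨y, hy⟩ := hsurjf ((u⁻¹ : _ˣ) : O ⧸ Ideal.span {π} ^ (ℓ - 1))
    have hxy : f (x * y - 1) = 0 := by
      rw [map_sub, _root_.map_mul, ← hu, hy, _root_.map_one, Units.mul_inv, sub_self]
    set m := x * y - 1 with hm
    have hm2 : m * m = 0 := hsq _ _ hxy hxy
    refine IsUnit.of_mul_eq_one (a := x) (y * (1 - m)) ?_
    have hx1 : x * y = 1 + m := by rw [hm]; ring
    calc x * (y * (1 - m)) = (x * y) * (1 - m) := by ring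
    _ = (1 + m) * (1 - m) := by rw [hx1]
    _ = 1 - m * m + (m - m) := by ring
    _ = 1 := by rw [hm2]; ring
  have hsurjF : Function.Surjective F := by
    intro h
    set A : Matrix (Fin 2) (Fin 2) (O ⧸ Ideal.span {π} ^ ℓ) :=
      fun i j => Classical.choose (hsurjf ((h : Matrix (Fin 2) (Fin 2) _) i j)) with hA
    have hAmap : A.map f = (h : Matrix (Fin 2) (Fin 2) _) := by
      ext i j
      exact Classical.choose_spec (hsurjf ((h : Matrix (Fin 2) (Fin 2) _) i j))
    have hdet : IsUnit A.det := by
      apply hunit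
      rw [RingHom.map_det, RingHom.mapMatrix_apply, hAmap]
      exact Matrix.isUnit_iff_isUnit_det _ |>.mp h.isUnit
    have hAunit : IsUnit A := (Matrix.isUnit_iff_isUnit_det A).mpr hdet
    obtain ⟨g, hg⟩ := hAunit
    refine ⟨g, ?_⟩
    apply Units.ext
    show f.mapMatrix (g : Matrix (Fin 2) (Fin 2) _) = _
    rw [RingHom.mapMatrix_apply, hg, hAmap]
  -- elements of the kernel have order dividing p
  have hgp : ∀ g ∈ F.ker, g ^ p = 1 := by
    intro g hg
    have hg1 : F g = 1 := hg
    have hgv : (g : Matrix (Fin 2) (Fin 2) (O ⧸ Ideal.span {π} ^ ℓ)).map ⇑f = 1 := by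
      have h2 := congrArg Units.val hg1
      simpa [hFdef, Matrix.GeneralLinearGroup.map, Units.coe_map,
        RingHom.mapMatrix_apply] using h2
    have hone : (1 : Matrix (Fin 2) (Fin 2) (O ⧸ Ideal.span {π} ^ ℓ)).map ⇑f = 1 :=
      Matrix.map_one _ (map_zero f) (_root_.map_one f)
    set M := (g : Matrix (Fin 2) (Fin 2) (O ⧸ Ideal.span {π} ^ ℓ)) - 1 with hMdef
    have hMf : ∀ i j, f (M i j) = 0 := by
      intro i j
      have h3 : f (M i j) = ((g : Matrix (Fin 2) (Fin 2) _).map ⇑f) i j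
          - ((1 : Matrix (Fin 2) (Fin 2) _).map ⇑f) i j := by
        simp [hMdef, Matrix.map_apply, map_sub]
      rw [h3, hgv, hone, sub_self]
    have hMM : M * M = 0 := by
      ext i j
      simp only [Matrix.mul_apply, Matrix.zero_apply]
      exact Finset.sum_eq_zero fun k _ => hsq _ _ (hMf i k) (hMf k j)
    have hpM : p • M = 0 := by
      ext i j
      simp only [Matrix.smul_apply, Matrix.zero_apply, nsmul_eq_mul]
      exact hpker _ (hMf i j)
    have hmat : (g : Matrix (Fin 2) (Fin 2) (O ⧸ Ideal.span {π} ^ ℓ)) ^ p = 1 := by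
      have h4 : (g : Matrix (Fin 2) (Fin 2) (O ⧸ Ideal.span {π} ^ ℓ)) = 1 + M := by
        rw [hMdef]; abel
      rw [h4, one_add_sq_zero_pow M hMM, hpM, add_zero]
    apply Units.ext
    rw [Units.val_pow_eq_pow_val, hmat, Units.val_one]
  constructor
  · -- forward direction
    intro hre
    -- kernel acts trivially
    have hK1 : ∀ g ∈ F.ker, σ g = 1 := by
      intro g hg
      obtain ⟨c, hc⟩ := hnonreg g hg
      obtain ⟨v, hv⟩ := exists_ne (0 : V)
      have hcp : c ^ p = 1 := by
        have h1 : σ g ^ p = 1 := by rw [← map_pow, hgp g hg, _root_.map_one]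
        have h2 : (c ^ p) • (LinearMap.id : V →ₗ[ℂ] V) = 1 := by
          rw [← h1, hc, smul_pow, ← Module.End.one_eq_id, one_pow]
        have h3 := LinearMap.congr_fun h2 v
        simp only [LinearMap.smul_apply, LinearMap.id_apply, Module.End.one_apply] at h3
        by_contra hne
        have h4 : (c ^ p - 1) • v = 0 := by rw [sub_smul, h3, one_smul, sub_self]
        rcases smul_eq_zero.mp h4 with h5 | h5
        · exact hne (by linear_combination h5)
        · exact hv h5
      have him : c.im = 0 := by
        have h1 := hre g
        rw [hc, _root_.map_smul, LinearMap.trace_id, smul_eq_mul] at h1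
        have h3 : (Module.finrank ℂ V : ℝ) ≠ 0 := by
          exact_mod_cast (Module.finrank_pos (R := ℂ) (M := V)).ne'
        have h4 : c.im * (Module.finrank ℂ V : ℝ) = 0 := by
          simpa [Complex.mul_im] using h1
        exact (mul_eq_zero.mp h4).resolve_right h3
      have hc1 : c = 1 := by
        have hrc : (c.re : ℂ) = c := by
          apply Complex.ext <;> simp [him]
        have h5 : (c.re) ^ p = 1 := by
          have h6 : ((c.re ^ p : ℝ) : ℂ) = 1 := by
            rw [Complex.ofReal_pow, hrc, hcp]
          exact_mod_cast h6
        have h7 : c.re = 1 := hodd.strictMono_pow.injective (by rw [h5, one_pow])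
        rw [← hrc, h7, Complex.ofReal_one]
      rw [hc, hc1, one_smul, Module.End.one_eq_id]
    have hfib : ∀ g₁ g₂, F g₁ = F g₂ → σ g₁ = σ g₂ := by
      intro g₁ g₂ h
      have hk : g₂⁻¹ * g₁ ∈ F.ker := by
        rw [MonoidHom.mem_ker, _root_.map_mul, map_inv, h, inv_mul_cancel]
      calc σ g₁ = σ (g₂ * (g₂⁻¹ * g₁)) := by rw [mul_inv_cancel_left]
      _ = σ g₂ * σ (g₂⁻¹ * g₁) := by rw [_root_.map_mul]
      _ = σ g₂ := by rw [hK1 _ hk, mul_one]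
    set φ : GL (Fin 2) (O ⧸ Ideal.span {π} ^ (ℓ - 1)) → GL (Fin 2) (O ⧸ Ideal.span {π} ^ ℓ) :=
      Function.surjInv hsurjF with hφdef
    have hφ : ∀ h, F (φ h) = h := fun h => Function.surjInv_eq hsurjF h
    set σ'' : GL (Fin 2) (O ⧸ Ideal.span {π} ^ (ℓ - 1)) →* Module.End ℂ V :=
      { toFun := fun h => σ (φ h)
        map_one' := by
          show σ (φ 1) = 1
          rw [hfib (φ 1) 1 (by rw [hφ, _root_.map_one]), _root_.map_one]
        map_mul' := by
          intro h₁ h₂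
          show σ (φ (h₁ * h₂)) = σ (φ h₁) * σ (φ h₂)
          rw [hfib (φ (h₁ * h₂)) (φ h₁ * φ h₂) (by rw [hφ, _root_.map_mul, hφ, hφ]),
            _root_.map_mul] } with hσ''def
    have hσ'' : ∀ g, σ'' (F g) = σ g := fun g => hfib _ _ (hφ _)
    set n := Module.finrank ℂ V with hn
    set e : V ≃ₗ[ℂ] (Fin n → ℂ) := (Module.finBasis ℂ V).equivFun with hedef
    set σ' : Representation ℂ (GL (Fin 2) (O ⧸ Ideal.span {π} ^ (ℓ - 1))) (Fin n → ℂ) :=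
      { toFun := fun h => e.conj (σ'' h)
        map_one' := by
          show e.conj (σ'' 1) = 1
          rw [_root_.map_one, Module.End.one_eq_id, LinearEquiv.conj_id, Module.End.one_eq_id]
        map_mul' := by
          intro h₁ h₂
          show e.conj (σ'' (h₁ * h₂)) = e.conj (σ'' h₁) * e.conj (σ'' h₂)
          rw [_root_.map_mul, Module.End.mul_eq_comp, LinearEquiv.conj_comp,
            Module.End.mul_eq_comp] } with hσ'def
    have hcm : ∀ g v, e (σ g v) = σ' (F g) (e v) := by
      intro g v
      show e (σ g v) = (e.conj (σ'' (F g))) (e v)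
      rw [hσ'', LinearEquiv.conj_apply_apply, LinearEquiv.symm_apply_apply]
    refine ⟨n, σ', ⟨?_, ?_⟩, ?_, e, hcm⟩
    · exact e.symm.toEquiv.nontrivial
    · intro W hW
      have hinv : ∀ g : GL (Fin 2) (O ⧸ Ideal.span {π} ^ ℓ),
          ∀ v ∈ W.comap (e : V →ₗ[ℂ] (Fin n → ℂ)),
          σ g v ∈ W.comap (e : V →ₗ[ℂ] (Fin n → ℂ)) := by
        intro g v hv
        simp only [Submodule.mem_comap, LinearEquiv.coe_coe] at hv ⊢
        rw [hcm g v]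
        exact hW _ _ hv
      have hsurj_e : Function.Surjective (e : V →ₗ[ℂ] (Fin n → ℂ)) := e.surjective
      rcases hirr.2 _ hinv with h | h
      · left
        have h2 := congrArg (Submodule.map (e : V →ₗ[ℂ] (Fin n → ℂ))) h
        rwa [Submodule.map_comap_eq_of_surjective hsurj_e, Submodule.map_bot] at h2
      · right
        have h2 := congrArg (Submodule.map (e : V →ₗ[ℂ] (Fin n → ℂ))) h
        rwa [Submodule.map_comap_eq_of_surjective hsurj_e, Submodule.map_top,
          LinearMap.range_eq_top.mpr hsurj_e] at h2
    · intro h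
      show (LinearMap.trace ℂ (Fin n → ℂ) (e.conj (σ'' h))).im = 0
      rw [LinearMap.trace_conj']
      exact hre (φ h)
  · -- reverse direction
    rintro ⟨n, σ', hirr', hre', e, hcm⟩ g
    have h1 : σ g = (e.symm.conj (σ' (F g)) : Module.End ℂ V) := by
      apply LinearMap.ext; intro v
      rw [LinearEquiv.conj_apply_apply, LinearEquiv.symm_symm, ← hcm g v,
        LinearEquiv.symm_apply_apply]
    rw [h1, LinearMap.trace_conj']
    exact hre' _
end

section
/- Let m ≥ 1 and let A ∈ M₂(𝔬_m) be a matrix whose entrywise reduction Ā ∈ M₂(𝗄) modulo π is not a scalar matrix. Let C := C_{GL₂(𝔬_m)}(A) be the centralizer of A in GL₂(𝔬_m) and D := det(C) ≤ 𝔬_m^× its image under the determinant. If the characteristic polynomial of Ā either has two distinct roots in 𝗄 or is irreducible over 𝗄, then D = 𝔬_m^×; if Ā has a repeated eigenvalue in 𝗄 (and is non-scalar), then D is a subgroup of index 2 in 𝔬_m^×. -/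
open Matrix Polynomial

/-- The centralizer of a matrix `A` inside `GL₂(R)`. -/
def matCentralizer (R : Type) [CommRing R] (A : Matrix (Fin 2) (Fin 2) R) :
    Subgroup (GL (Fin 2) R) where
  carrier := {g | (g : Matrix (Fin 2) (Fin 2) R) * A = A * g}
  one_mem' := by
    show Commute ((1 : GL (Fin 2) R) : Matrix (Fin 2) (Fin 2) R) A
    rw [Units.val_one]
    exact Commute.one_left A
  mul_mem' := by
    intro a b ha hb
    show Commute ((↑(a * b) : Matrix (Fin 2) (Fin 2) R)) A
    rw [Units.val_mul]
    exact Commute.mul_left ha hb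
  inv_mem' := by
    intro a ha
    exact Commute.units_inv_left ha

lemma charpoly_fin_two' {R : Type*} [CommRing R] (M : Matrix (Fin 2) (Fin 2) R) :
    M.charpoly = X^2 - C (M 0 0 + M 1 1) * X + C (M 0 0 * M 1 1 - M 0 1 * M 1 0) := by
  rw [Matrix.charpoly, Matrix.det_fin_two]
  simp [charmatrix_apply_eq, charmatrix_apply_ne]
  ring

lemma det_smul_one_add {R : Type*} [CommRing R] (A : Matrix (Fin 2) (Fin 2) R) (x y : R) :
    (x • (1 : Matrix (Fin 2) (Fin 2) R) + y • A).det
      = x^2 + (A 0 0 + A 1 1) * (x*y) + (A 0 0 * A 1 1 - A 0 1 * A 1 0) * y^2 := by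
  rw [Matrix.det_fin_two]
  simp [Matrix.add_apply, Matrix.smul_apply, Matrix.one_apply]
  ring

lemma smul_one_add_comm {R : Type*} [CommRing R] (A : Matrix (Fin 2) (Fin 2) R) (x y : R) :
    (x • (1 : Matrix (Fin 2) (Fin 2) R) + y • A) * A = A * (x • 1 + y • A) := by
  simp [add_mul, mul_add, Matrix.smul_mul, Matrix.mul_smul]

lemma poly_sq {F : Type*} [CommRing F] (c : F) :
    ((X - C c)^2 : F[X]) = X^2 - C (2*c) * X + C (c^2) := by
  rw [C_mul, map_pow, map_ofNat]
  ring

lemma centralizer_structure {R : Type*} [CommRing R] (A B : Matrix (Fin 2) (Fin 2) R)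
    (h : IsUnit (A 0 1) ∨ IsUnit (A 1 0) ∨ IsUnit (A 0 0 - A 1 1))
    (hc : B * A = A * B) :
    ∃ x y : R, B = x • (1 : Matrix (Fin 2) (Fin 2) R) + y • A := by
  have e00 : B 0 0 * A 0 0 + B 0 1 * A 1 0 = A 0 0 * B 0 0 + A 0 1 * B 1 0 := by
    have := congrFun (congrFun hc 0) 0
    simpa [Matrix.mul_apply, Fin.sum_univ_two] using this
  have e01 : B 0 0 * A 0 1 + B 0 1 * A 1 1 = A 0 0 * B 0 1 + A 0 1 * B 1 1 := by
    have := congrFun (congrFun hc 0) 1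
    simpa [Matrix.mul_apply, Fin.sum_univ_two] using this
  have e10 : B 1 0 * A 0 0 + B 1 1 * A 1 0 = A 1 0 * B 0 0 + A 1 1 * B 1 0 := by
    have := congrFun (congrFun hc 1) 0
    simpa [Matrix.mul_apply, Fin.sum_univ_two] using this
  rcases h with hv | hv | hv
  · obtain ⟨u, hu⟩ := hv
    have hw : A 0 1 * ↑u⁻¹ = 1 := by rw [← hu]; exact u.mul_inv
    refine ⟨B 0 0 - (B 0 1 * ↑u⁻¹) * A 0 0, B 0 1 * ↑u⁻¹, ?_⟩
    ext i j
    fin_cases i <;> fin_cases j <;>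
      simp [Matrix.add_apply, Matrix.smul_apply, Matrix.one_apply]
    · linear_combination (-(B 0 1)) * hw
    · linear_combination (-(↑u⁻¹ : R)) * e00 - B 1 0 * hw
    · linear_combination (-(↑u⁻¹ : R)) * e01 + (B 0 0 - B 1 1) * hw
  · obtain ⟨u, hu⟩ := hv
    have hw : A 1 0 * ↑u⁻¹ = 1 := by rw [← hu]; exact u.mul_inv
    refine ⟨B 0 0 - (B 1 0 * ↑u⁻¹) * A 0 0, B 1 0 * ↑u⁻¹, ?_⟩
    ext i j
    fin_cases i <;> fin_cases j <;>
      simp [Matrix.add_apply, Matrix.smul_apply, Matrix.one_apply]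
    · linear_combination (↑u⁻¹ : R) * e00 - B 0 1 * hw
    · linear_combination (-(B 1 0)) * hw
    · linear_combination (↑u⁻¹ : R) * e10 + (B 0 0 - B 1 1) * hw
  · obtain ⟨u, hu⟩ := hv
    have hw : (A 0 0 - A 1 1) * ↑u⁻¹ = 1 := by rw [← hu]; exact u.mul_inv
    refine ⟨B 0 0 - ((B 0 0 - B 1 1) * ↑u⁻¹) * A 0 0, (B 0 0 - B 1 1) * ↑u⁻¹, ?_⟩
    ext i j
    fin_cases i <;> fin_cases j <;>
      simp [Matrix.add_apply, Matrix.smul_apply, Matrix.one_apply]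
    · linear_combination (-(↑u⁻¹ : R)) * e01 - B 0 1 * hw
    · linear_combination (↑u⁻¹ : R) * e10 - B 1 0 * hw
    · linear_combination (B 0 0 - B 1 1) * hw

lemma ff_exists_rep {F : Type*} [Field F] [Fintype F] (hcard : Fintype.card F % 2 = 1)
    {e : F} (he : e ≠ 0) (c : F) : ∃ x y : F, x^2 - e*y^2 = c := by
  obtain ⟨a, b, hab⟩ := FiniteField.exists_root_sum_quadratic
    (f := X^2 - Polynomial.C c) (g := Polynomial.C (-e) * X^2)
    (Polynomial.degree_X_pow_sub_C (by norm_num) c)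
    (by rw [Polynomial.degree_C_mul_X_pow _ (neg_ne_zero.2 he)]; rfl)
    hcard
  refine ⟨a, b, ?_⟩
  simp only [Polynomial.eval_sub, Polynomial.eval_pow, Polynomial.eval_X, Polynomial.eval_C,
    Polynomial.eval_mul] at hab
  linear_combination hab

lemma ff_sq_index {F : Type*} [Field F] [Finite F] (h2 : (2:F) ≠ 0) :
    ((powMonoidHom 2 : Fˣ →* Fˣ).range).index = 2 := by
  have hn1 : (-1 : Fˣ) ≠ 1 := by
    intro h
    apply h2
    have := congrArg (Units.val) h
    simp only [Units.val_neg, Units.val_one] at this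
    linear_combination -this
  have hsq : (-1 : Fˣ)^2 = 1 := by simp
  have hker : (powMonoidHom 2 : Fˣ →* Fˣ).ker = Subgroup.zpowers (-1 : Fˣ) := by
    apply le_antisymm
    · intro v hv
      have hv2 : (v:F)^2 = 1 := by
        have h' : v^2 = 1 := hv
        have := congrArg Units.val h'
        push_cast at this
        exact this
      have : ((v:F) - 1) * ((v:F) + 1) = 0 := by linear_combination hv2
      rcases mul_eq_zero.1 this with h | h
      · have : v = 1 := Units.ext (by rw [Units.val_one]; linear_combination h)
        rw [this]; exact Subgroup.one_mem _
      · have : v = -1 := Units.ext (by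
          rw [Units.val_neg, Units.val_one]; linear_combination h)
        rw [this]; exact Subgroup.mem_zpowers _
    · rw [Subgroup.zpowers_le]
      exact hsq
  have hcardker : Nat.card ((powMonoidHom 2 : Fˣ →* Fˣ).ker) = 2 := by
    rw [hker, Nat.card_zpowers]
    exact orderOf_eq_prime hsq hn1
  have h1 : ((powMonoidHom 2 : Fˣ →* Fˣ).range).index
      * Nat.card ((powMonoidHom 2 : Fˣ →* Fˣ).range) = Nat.card Fˣ :=
    Subgroup.index_mul_card _
  have h2' : Nat.card Fˣ = Nat.card (Fˣ ⧸ (powMonoidHom 2 : Fˣ →* Fˣ).ker)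
      * Nat.card ((powMonoidHom 2 : Fˣ →* Fˣ).ker) :=
    Subgroup.card_eq_card_quotient_mul_card_subgroup _
  have h3 : Nat.card (Fˣ ⧸ (powMonoidHom 2 : Fˣ →* Fˣ).ker)
      = Nat.card ((powMonoidHom 2 : Fˣ →* Fˣ).range) :=
    Nat.card_congr (QuotientGroup.quotientKerEquivRange _).toEquiv
  have hpos : 0 < Nat.card ((powMonoidHom 2 : Fˣ →* Fˣ).range) := Nat.card_pos
  rw [h3, hcardker] at h2'
  rw [h2'] at h1
  apply Nat.eq_of_mul_eq_mul_right hpos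
  rw [h1, Nat.mul_comm]

section Quot
variable (O : Type) [CommRing O] [IsDomain O] [IsDiscreteValuationRing O]
  (π : O) (m : ℕ) (hm : 1 ≤ m)

set_option linter.unusedSectionVars false

lemma redq_mk (a : O) :
    redq O π hm (Ideal.Quotient.mk _ a) = Ideal.Quotient.mk _ a :=
  Ideal.Quotient.factor_mk _ a

lemma redq_surj : Function.Surjective (redq O π hm) := by
  intro y
  obtain ⟨a, rfl⟩ := Ideal.Quotient.mk_surjective y
  exact ⟨Ideal.Quotient.mk _ a, redq_mk O π m hm a⟩

lemma span_pow_one (hπ : IsLocalRing.maximalIdeal O = Ideal.span {π}) :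
    Ideal.span {π} ^ 1 = IsLocalRing.maximalIdeal O := by
  rw [pow_one, hπ]

lemma isUnit_iff_redq_ne (hπ : IsLocalRing.maximalIdeal O = Ideal.span {π})
    (x : O ⧸ Ideal.span {π} ^ m) :
    IsUnit x ↔ redq O π hm x ≠ 0 := by
  obtain ⟨a, rfl⟩ := Ideal.Quotient.mk_surjective x
  rw [redq_mk, Ne, Ideal.Quotient.eq_zero_iff_mem, span_pow_one O π hπ]
  constructor
  · rintro hu ha
    obtain ⟨b, hb⟩ := Ideal.Quotient.mk_surjective (↑(hu.unit)⁻¹ : O ⧸ Ideal.span {π} ^ m)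
    have h1 : Ideal.Quotient.mk (Ideal.span {π} ^ m) (a * b - 1) = 0 := by
      rw [map_sub, _root_.map_mul, hb, _root_.map_one, sub_eq_zero]
      exact hu.mul_val_inv
    rw [Ideal.Quotient.eq_zero_iff_mem] at h1
    have h2 : a * b - 1 ∈ IsLocalRing.maximalIdeal O := by
      rw [hπ]
      exact (Ideal.pow_le_self (by omega)) h1
    have h3 : a * b ∈ IsLocalRing.maximalIdeal O := Ideal.mul_mem_right _ _ ha
    have h4 : (1 : O) ∈ IsLocalRing.maximalIdeal O := by
      have := Ideal.sub_mem _ h3 h2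
      simpa using this
    exact (IsLocalRing.maximalIdeal.isMaximal O).ne_top ((Ideal.eq_top_iff_one _).2 h4)
  · intro ha
    have : IsUnit a := by
      by_contra hna
      exact ha ((IsLocalRing.mem_maximalIdeal a).2 hna)
    exact this.map _

lemma sq_lift (hπ : IsLocalRing.maximalIdeal O = Ideal.span {π})
    (h2k : (2 : IsLocalRing.ResidueField O) ≠ 0)
    [IsAdicComplete (IsLocalRing.maximalIdeal O) O]
    (u : O ⧸ Ideal.span {π} ^ m) (c : O ⧸ Ideal.span {π} ^ 1) (hc : c ≠ 0)
    (hu : redq O π hm u = c^2) : ∃ z, z^2 = u := by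
  obtain ⟨v, rfl⟩ := Ideal.Quotient.mk_surjective u
  obtain ⟨b, rfl⟩ := Ideal.Quotient.mk_surjective c
  rw [redq_mk, ← map_pow, Ideal.Quotient.eq, span_pow_one O π hπ] at hu
  have hb : b ∉ IsLocalRing.maximalIdeal O := by
    intro hb
    apply hc
    rw [Ideal.Quotient.eq_zero_iff_mem, span_pow_one O π hπ]
    exact hb
  have hmon : (X^2 - C v : O[X]).Monic := monic_X_pow_sub_C v (by norm_num)
  have heval : (X^2 - C v : O[X]).eval b ∈ IsLocalRing.maximalIdeal O := by
    have h' : b^2 - v ∈ IsLocalRing.maximalIdeal O := by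
      rw [show b^2 - v = -(v - b^2) by ring]
      exact Submodule.neg_mem _ hu
    simp only [Polynomial.eval_sub, Polynomial.eval_pow, Polynomial.eval_X, Polynomial.eval_C]
    exact h'
  have hd : (X^2 - C v : O[X]).derivative.eval b = 2 * b := by
    simp [Polynomial.derivative_X_pow]
    exact Or.inl one_add_one_eq_two
  have hb' : IsLocalRing.residue O b ≠ 0 := by
    intro h
    apply hb
    have h' : Ideal.Quotient.mk (IsLocalRing.maximalIdeal O) b = 0 := h
    exact (Ideal.Quotient.eq_zero_iff_mem).1 h'
  have h2' : IsLocalRing.residue O (2:O) ≠ 0 := by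
    rw [map_ofNat]
    exact h2k
  have hderiv : IsUnit (IsLocalRing.residue O ((X^2 - C v : O[X]).derivative.eval b)) := by
    rw [hd, _root_.map_mul]
    exact (isUnit_iff_ne_zero.2 h2').mul (isUnit_iff_ne_zero.2 hb')
  obtain ⟨a, ha, -⟩ := HenselianRing.is_henselian (I := IsLocalRing.maximalIdeal O)
    _ hmon b heval hderiv
  refine ⟨Ideal.Quotient.mk _ a, ?_⟩
  rw [← map_pow]
  have h5 : a^2 - v = 0 := by simpa [Polynomial.IsRoot] using ha
  rw [sub_eq_zero] at h5
  rw [h5]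

end Quot

set_option maxHeartbeats 1000000 in
set_option synthInstance.maxHeartbeats 100000 in
theorem det_of_centralizer
    (O : Type) [CommRing O] [IsDomain O] [IsDiscreteValuationRing O]
    [IsAdicComplete (IsLocalRing.maximalIdeal O) O]
    (π : O) (hπ : IsLocalRing.maximalIdeal O = Ideal.span {π})
    [Finite (IsLocalRing.ResidueField O)]
    (hodd : Odd (ringChar (IsLocalRing.ResidueField O)))
    (m : ℕ) (hm : 1 ≤ m)
    (A : Matrix (Fin 2) (Fin 2) (O ⧸ Ideal.span {π} ^ m))
    -- the reduction of A modulo π is not a scalar matrix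
    (hnonscalar : ¬ ∃ c : O ⧸ Ideal.span {π} ^ 1,
      A.map (redq O π hm) = c • (1 : Matrix (Fin 2) (Fin 2) (O ⧸ Ideal.span {π} ^ 1))) :
    -- if the characteristic polynomial of Ā has two distinct roots or is irreducible,
    -- then det(C) is the full unit group
    (((∃ a b : O ⧸ Ideal.span {π} ^ 1, a ≠ b ∧
          (A.map (redq O π hm)).charpoly.IsRoot a ∧
          (A.map (redq O π hm)).charpoly.IsRoot b) ∨
        Irreducible (A.map (redq O π hm)).charpoly) →
      Subgroup.map (GeneralLinearGroup.det) (matCentralizer _ A) = ⊤) ∧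
    -- if Ā has a repeated eigenvalue, then det(C) has index two in the unit group
    ((∃ a : O ⧸ Ideal.span {π} ^ 1,
        (A.map (redq O π hm)).charpoly = (X - C a) ^ 2) →
      (Subgroup.map (GeneralLinearGroup.det) (matCentralizer _ A)).index = 2) := by
  -- basic instances on the residue level
  haveI hmax : (Ideal.span {π} ^ 1).IsMaximal := by
    rw [span_pow_one O π hπ]
    exact IsLocalRing.maximalIdeal.isMaximal O
  letI : Field (O ⧸ Ideal.span {π} ^ 1) := Ideal.Quotient.field _
  have efq : IsLocalRing.ResidueField O ≃+* (O ⧸ Ideal.span {π} ^ 1) :=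
    Ideal.quotEquivOfEq (span_pow_one O π hπ).symm
  haveI : Finite (O ⧸ Ideal.span {π} ^ 1) := Finite.of_equiv _ efq.toEquiv
  -- 2 is invertible everywhere
  have h2k : (2 : IsLocalRing.ResidueField O) ≠ 0 := by
    intro h
    have h' : ((2:ℕ) : IsLocalRing.ResidueField O) = 0 := by exact_mod_cast h
    have hdvd : ringChar (IsLocalRing.ResidueField O) ∣ 2 := ringChar.dvd h'
    rcases (Nat.dvd_prime Nat.prime_two).1 hdvd with h1 | h1
    · exact CharP.ringChar_ne_one h1
    · rw [h1] at hodd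
      exact (by decide : ¬ Odd 2) hodd
  have h21 : (2 : O ⧸ Ideal.span {π} ^ 1) ≠ 0 := by
    intro h
    apply h2k
    rw [← map_ofNat (Ideal.Quotient.mk (Ideal.span {π} ^ 1)) 2,
      Ideal.Quotient.eq_zero_iff_mem, span_pow_one O π hπ] at h
    rw [← map_ofNat (IsLocalRing.residue O) 2]
    exact (Ideal.Quotient.eq_zero_iff_mem).2 h
  have hured : ∀ v : O ⧸ Ideal.span {π} ^ m, IsUnit v → redq O π hm v ≠ 0 :=
    fun v hv => (isUnit_iff_redq_ne O π m hm hπ v).1 hv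
  have h2m : IsUnit (2 : O ⧸ Ideal.span {π} ^ m) := by
    rw [isUnit_iff_redq_ne O π m hm hπ, map_ofNat]
    exact h21
  -- the non-scalar hypothesis gives a unit among the relevant entries
  have hu3 : IsUnit (A 0 1) ∨ IsUnit (A 1 0) ∨ IsUnit (A 0 0 - A 1 1) := by
    by_contra hcon
    push_neg at hcon
    obtain ⟨h1, h2, h3⟩ := hcon
    rw [isUnit_iff_redq_ne O π m hm hπ, not_ne_iff] at h1 h2 h3
    apply hnonscalar
    refine ⟨redq O π hm (A 0 0), ?_⟩
    ext i j
    fin_cases i <;> fin_cases j <;>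
      simp [Matrix.map_apply, Matrix.smul_apply, Matrix.one_apply, h1, h2]
    rw [map_sub] at h3
    linear_combination -h3
  -- charpoly of the reduction
  have hcp : (A.map (redq O π hm)).charpoly
      = X^2 - C (redq O π hm (A 0 0 + A 1 1)) * X
        + C (redq O π hm (A 0 0 * A 1 1 - A 0 1 * A 1 0)) := by
    rw [charpoly_fin_two']
    simp only [Matrix.map_apply, map_add (redq O π hm), map_sub (redq O π hm),
      _root_.map_mul (redq O π hm)]
  -- membership criteria for the image of det
  have hmem : ∀ w : (O ⧸ Ideal.span {π} ^ m)ˣ,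
      (∃ x y, x^2 + (A 0 0 + A 1 1)*(x*y) + (A 0 0 * A 1 1 - A 0 1 * A 1 0)*y^2
        = (w : O ⧸ Ideal.span {π} ^ m)) →
      w ∈ Subgroup.map (GeneralLinearGroup.det) (matCentralizer _ A) := by
    rintro w ⟨x, y, hxy⟩
    have hdet : (x • (1 : Matrix (Fin 2) (Fin 2) (O ⧸ Ideal.span {π} ^ m)) + y • A).det = ↑w := by
      rw [det_smul_one_add]
      exact hxy
    have hMunit : IsUnit ((x • (1 : Matrix (Fin 2) (Fin 2) (O ⧸ Ideal.span {π} ^ m)) + y • A).det) := by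
      rw [hdet]; exact w.isUnit
    refine Subgroup.mem_map.2 ⟨Matrix.GeneralLinearGroup.mk'' _ hMunit, ?_, ?_⟩
    · show (↑(Matrix.GeneralLinearGroup.mk'' _ hMunit) : Matrix (Fin 2) (Fin 2) _) * A
        = A * (↑(Matrix.GeneralLinearGroup.mk'' _ hMunit) : Matrix (Fin 2) (Fin 2) _)
      show (x • (1 : Matrix (Fin 2) (Fin 2) (O ⧸ Ideal.span {π} ^ m)) + y • A) * A
        = A * (x • (1 : Matrix (Fin 2) (Fin 2) (O ⧸ Ideal.span {π} ^ m)) + y • A)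
      exact smul_one_add_comm A x y
    · apply Units.ext
      rw [Matrix.GeneralLinearGroup.val_det_apply]
      exact hdet
  have hmem2 : ∀ w : (O ⧸ Ideal.span {π} ^ m)ˣ,
      w ∈ Subgroup.map (GeneralLinearGroup.det) (matCentralizer _ A) →
      ∃ x y, x^2 + (A 0 0 + A 1 1)*(x*y) + (A 0 0 * A 1 1 - A 0 1 * A 1 0)*y^2
        = (w : O ⧸ Ideal.span {π} ^ m) := by
    rintro w ⟨g, hg, rfl⟩
    obtain ⟨x, y, hB⟩ := centralizer_structure A (↑g) hu3 hg
    refine ⟨x, y, ?_⟩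
    rw [← det_smul_one_add A x y, ← hB]
    exact (Matrix.GeneralLinearGroup.val_det_apply g).symm
  -- the "half" element
  obtain ⟨u2, hu2⟩ := h2m
  have hh : (2 : O ⧸ Ideal.span {π} ^ m) * ↑u2⁻¹ = 1 := by
    rw [← hu2]; exact u2.mul_inv
  have hq : ∀ x y : O ⧸ Ideal.span {π} ^ m,
      x^2 + (A 0 0 + A 1 1)*(x*y) + (A 0 0 * A 1 1 - A 0 1 * A 1 0)*y^2
      = (x + ↑u2⁻¹*(A 0 0 + A 1 1)*y)^2
        - (↑u2⁻¹*↑u2⁻¹*((A 0 0 + A 1 1)^2 - 4*(A 0 0 * A 1 1 - A 0 1 * A 1 0)))*y^2 := by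
    intro x y
    linear_combination (-((A 0 0 + A 1 1)*x*y)
      - (1+2*(↑u2⁻¹ : O ⧸ Ideal.span {π} ^ m))*((A 0 0 * A 1 1 - A 0 1 * A 1 0)*y^2)) * hh
  have hΔred : redq O π hm ((A 0 0 + A 1 1)^2 - 4*(A 0 0 * A 1 1 - A 0 1 * A 1 0))
      = (redq O π hm (A 0 0 + A 1 1))^2 - 4*(redq O π hm (A 0 0 * A 1 1 - A 0 1 * A 1 0)) := by
    rw [map_sub, map_pow, _root_.map_mul, map_ofNat]
  constructor
  · -- Part 1: split or irreducible
    intro hcase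
    have hΔ1 : redq O π hm ((A 0 0 + A 1 1)^2 - 4*(A 0 0 * A 1 1 - A 0 1 * A 1 0)) ≠ 0 := by
      rw [hΔred]
      rcases hcase with ⟨a, b, hab, ha, hb⟩ | hirr
      · rw [hcp] at ha hb
        have ea : a^2 - (redq O π hm (A 0 0 + A 1 1))*a
            + redq O π hm (A 0 0 * A 1 1 - A 0 1 * A 1 0) = 0 := by
          have := ha
          simp only [Polynomial.IsRoot.def, Polynomial.eval_add, Polynomial.eval_sub,
            Polynomial.eval_mul, Polynomial.eval_pow, Polynomial.eval_X, Polynomial.eval_C] at this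
          linear_combination this
        have eb : b^2 - (redq O π hm (A 0 0 + A 1 1))*b
            + redq O π hm (A 0 0 * A 1 1 - A 0 1 * A 1 0) = 0 := by
          have := hb
          simp only [Polynomial.IsRoot.def, Polynomial.eval_add, Polynomial.eval_sub,
            Polynomial.eval_mul, Polynomial.eval_pow, Polynomial.eval_X, Polynomial.eval_C] at this
          linear_combination this
        have h1 : (a - b) * (a + b - redq O π hm (A 0 0 + A 1 1)) = 0 := by
          linear_combination ea - eb
        have htt : redq O π hm (A 0 0 + A 1 1) = a + b := by
          rcases mul_eq_zero.1 h1 with h | h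
          · exact absurd (sub_eq_zero.1 h) hab
          · linear_combination -h
        have hdd : redq O π hm (A 0 0 * A 1 1 - A 0 1 * A 1 0) = a*b := by
          linear_combination ea + a * htt
        rw [htt, hdd, show (a+b)^2 - 4*(a*b) = (a-b)^2 by ring]
        exact pow_ne_zero _ (sub_ne_zero.2 hab)
      · intro hΔ0
        have hinv : (2 : O ⧸ Ideal.span {π} ^ 1) * (2 : O ⧸ Ideal.span {π} ^ 1)⁻¹ = 1 :=
          mul_inv_cancel₀ h21
        have e1 : redq O π hm (A 0 0 + A 1 1)
            = 2*((2 : O ⧸ Ideal.span {π} ^ 1)⁻¹ * redq O π hm (A 0 0 + A 1 1)) := by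
          linear_combination (-(redq O π hm (A 0 0 + A 1 1))) * hinv
        have e2 : redq O π hm (A 0 0 * A 1 1 - A 0 1 * A 1 0)
            = ((2 : O ⧸ Ideal.span {π} ^ 1)⁻¹ * redq O π hm (A 0 0 + A 1 1))^2 := by
          linear_combination (-(((2 : O ⧸ Ideal.span {π} ^ 1)⁻¹)^2)) * hΔ0
            - (redq O π hm (A 0 0 * A 1 1 - A 0 1 * A 1 0))
              * (1 + 2*(2 : O ⧸ Ideal.span {π} ^ 1)⁻¹) * hinv
        have key : (A.map (redq O π hm)).charpoly
            = (X - C ((2 : O ⧸ Ideal.span {π} ^ 1)⁻¹ * redq O π hm (A 0 0 + A 1 1)))^2 := by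
          rw [hcp, poly_sq, ← e1, ← e2]
        rw [key] at hirr
        rcases hirr.isUnit_or_isUnit (sq _) with h' | h' <;>
          exact Polynomial.not_isUnit_X_sub_C _ h'
    have hΔm : IsUnit ((A 0 0 + A 1 1)^2 - 4*(A 0 0 * A 1 1 - A 0 1 * A 1 0)) :=
      (isUnit_iff_redq_ne O π m hm hπ _).2 hΔ1
    rw [Subgroup.eq_top_iff']
    intro w
    apply hmem
    -- counting in the residue field
    haveI : Fintype (O ⧸ Ideal.span {π} ^ 1) := Fintype.ofFinite _
    have hcardodd : Fintype.card (O ⧸ Ideal.span {π} ^ 1) % 2 = 1 := by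
      haveI : Fintype (IsLocalRing.ResidueField O) := Fintype.ofFinite _
      haveI := ringChar.charP (IsLocalRing.ResidueField O)
      have hcongr : Fintype.card (O ⧸ Ideal.span {π} ^ 1)
          = Fintype.card (IsLocalRing.ResidueField O) := Fintype.card_congr efq.toEquiv.symm
      obtain ⟨n, hp, hcard⟩ := FiniteField.card (IsLocalRing.ResidueField O)
        (ringChar (IsLocalRing.ResidueField O))
      rw [hcongr, hcard]
      exact Nat.odd_iff.1 (hodd.pow)
    have he : redq O π hm (↑u2⁻¹*↑u2⁻¹*((A 0 0 + A 1 1)^2 - 4*(A 0 0 * A 1 1 - A 0 1 * A 1 0))) ≠ 0 := by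
      rw [_root_.map_mul, _root_.map_mul]
      exact mul_ne_zero (mul_ne_zero (hured _ u2⁻¹.isUnit) (hured _ u2⁻¹.isUnit)) hΔ1
    obtain ⟨xb, yb, hxy⟩ := ff_exists_rep hcardodd he (redq O π hm ↑w)
    have hwne : redq O π hm ↑w ≠ 0 := hured _ w.isUnit
    by_cases hxb : xb = 0
    · subst hxb
      have hybne : yb ≠ 0 := by
        rintro rfl
        apply hwne
        rw [← hxy]
        ring
      have hvu : IsUnit (↑u2⁻¹*↑u2⁻¹*((A 0 0 + A 1 1)^2 - 4*(A 0 0 * A 1 1 - A 0 1 * A 1 0))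
          : O ⧸ Ideal.span {π} ^ m) := (u2⁻¹.isUnit.mul u2⁻¹.isUnit).mul hΔm
      obtain ⟨uv, huv⟩ := hvu
      have h1 : (↑uv⁻¹ : O ⧸ Ideal.span {π} ^ m)
          * (↑u2⁻¹*↑u2⁻¹*((A 0 0 + A 1 1)^2 - 4*(A 0 0 * A 1 1 - A 0 1 * A 1 0))) = 1 := by
        rw [← huv]; exact uv.inv_mul
      have h2 : redq O π hm ↑uv⁻¹
          * redq O π hm (↑u2⁻¹*↑u2⁻¹*((A 0 0 + A 1 1)^2 - 4*(A 0 0 * A 1 1 - A 0 1 * A 1 0))) = 1 := by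
        rw [← _root_.map_mul, h1, _root_.map_one]
      have hs : redq O π hm (↑uv⁻¹ * (-(↑w : O ⧸ Ideal.span {π} ^ m))) = yb^2 := by
        rw [_root_.map_mul, map_neg]
        linear_combination (redq O π hm ↑uv⁻¹) * hxy + yb^2 * h2
      obtain ⟨yv, hyv⟩ := sq_lift O π m hm hπ h2k _ yb hybne hs
      have h3 : (↑u2⁻¹*↑u2⁻¹*((A 0 0 + A 1 1)^2 - 4*(A 0 0 * A 1 1 - A 0 1 * A 1 0))
          : O ⧸ Ideal.span {π} ^ m) * ↑uv⁻¹ = 1 := by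
        rw [← huv]; exact uv.mul_inv
      refine ⟨-(↑u2⁻¹*(A 0 0 + A 1 1)*yv), yv, ?_⟩
      rw [hq]
      linear_combination (-(↑u2⁻¹*↑u2⁻¹*((A 0 0 + A 1 1)^2 - 4*(A 0 0 * A 1 1 - A 0 1 * A 1 0))
        : O ⧸ Ideal.span {π} ^ m)) * hyv + (↑w : O ⧸ Ideal.span {π} ^ m) * h3
    · obtain ⟨y, hy⟩ := redq_surj O π m hm yb
      have hs : redq O π hm ((↑w : O ⧸ Ideal.span {π} ^ m)
          + (↑u2⁻¹*↑u2⁻¹*((A 0 0 + A 1 1)^2 - 4*(A 0 0 * A 1 1 - A 0 1 * A 1 0)))*y^2) = xb^2 := by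
        rw [map_add, _root_.map_mul, map_pow, hy]
        linear_combination -hxy
      obtain ⟨z, hz⟩ := sq_lift O π m hm hπ h2k _ xb hxb hs
      refine ⟨z - ↑u2⁻¹*(A 0 0 + A 1 1)*y, y, ?_⟩
      rw [hq]
      linear_combination hz
  · -- Part 2: repeated root
    rintro ⟨a, hsq⟩
    rw [hcp, poly_sq] at hsq
    have ht1 : redq O π hm (A 0 0 + A 1 1) = 2*a := by
      have h1 := congrArg (fun p => Polynomial.coeff p 1) hsq
      simp only [Polynomial.coeff_add, Polynomial.coeff_sub, Polynomial.coeff_X_pow,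
        Polynomial.coeff_C_mul, Polynomial.coeff_X_one, Polynomial.coeff_C] at h1
      simp at h1
      rw [map_add (redq O π hm)]
      linear_combination -h1
    have hd1 : redq O π hm (A 0 0 * A 1 1 - A 0 1 * A 1 0) = a^2 := by
      have h1 := congrArg (fun p => Polynomial.coeff p 0) hsq
      simp only [Polynomial.coeff_add, Polynomial.coeff_sub, Polynomial.coeff_X_pow,
        Polynomial.coeff_C_mul, Polynomial.coeff_X_zero, Polynomial.coeff_C] at h1
      simp at h1
      rw [map_sub (redq O π hm), _root_.map_mul (redq O π hm), _root_.map_mul (redq O π hm)]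
      linear_combination h1
    have hΔ0 : redq O π hm ((A 0 0 + A 1 1)^2 - 4*(A 0 0 * A 1 1 - A 0 1 * A 1 0)) = 0 := by
      rw [hΔred, ht1, hd1]
      ring
    -- the subgroup of squares in the residue field units
    set sqk := ((powMonoidHom 2 : (O ⧸ Ideal.span {π} ^ 1)ˣ →* (O ⧸ Ideal.span {π} ^ 1)ˣ).range)
      with hsqk
    let φ : (O ⧸ Ideal.span {π} ^ m)ˣ →* (O ⧸ Ideal.span {π} ^ 1)ˣ ⧸ sqk :=
      (QuotientGroup.mk' sqk).comp (Units.map (redq O π hm).toMonoidHom)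
    have hφs : Function.Surjective φ := by
      apply Function.Surjective.comp (QuotientGroup.mk'_surjective _)
      intro c
      obtain ⟨xv, hxv⟩ := redq_surj O π m hm (↑c)
      have hxu : IsUnit xv := by
        rw [isUnit_iff_redq_ne O π m hm hπ, hxv]
        exact c.ne_zero
      refine ⟨hxu.unit, Units.ext ?_⟩
      rw [Units.coe_map]
      show redq O π hm ↑hxu.unit = ↑c
      rw [hxu.unit_spec, hxv]
    have hker : Subgroup.map (GeneralLinearGroup.det) (matCentralizer _ A) = φ.ker := by
      ext w
      rw [MonoidHom.mem_ker]
      constructor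
      · intro hw
        obtain ⟨x, y, hxy⟩ := hmem2 w hw
        have hw2 : (↑w : O ⧸ Ideal.span {π} ^ m)
            = (x + ↑u2⁻¹*(A 0 0 + A 1 1)*y)^2
              - (↑u2⁻¹*↑u2⁻¹*((A 0 0 + A 1 1)^2 - 4*(A 0 0 * A 1 1 - A 0 1 * A 1 0)))*y^2 := by
          rw [← hxy, hq]
        have hz2 : redq O π hm ↑w = (redq O π hm (x + ↑u2⁻¹*(A 0 0 + A 1 1)*y))^2 := by
          rw [hw2, map_sub, map_pow, _root_.map_mul, map_pow, _root_.map_mul, _root_.map_mul, hΔ0]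
          ring
        have hwne : redq O π hm ↑w ≠ 0 := hured _ w.isUnit
        have hzne : redq O π hm (x + ↑u2⁻¹*(A 0 0 + A 1 1)*y) ≠ 0 := by
          intro h
          apply hwne
          rw [hz2, h]
          ring
        show (QuotientGroup.mk' sqk) (Units.map (redq O π hm).toMonoidHom w) = 1
        rw [QuotientGroup.mk'_apply, QuotientGroup.eq_one_iff]
        refine ⟨(isUnit_iff_ne_zero.2 hzne).unit, Units.ext ?_⟩
        show ((isUnit_iff_ne_zero.2 hzne).unit : O ⧸ Ideal.span {π} ^ 1)^2
          = (Units.map (redq O π hm).toMonoidHom w : O ⧸ Ideal.span {π} ^ 1)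
        rw [IsUnit.unit_spec, Units.coe_map]
        exact hz2.symm
      · intro hw
        have hw' : (Units.map (redq O π hm).toMonoidHom w) ∈ sqk := by
          rw [← QuotientGroup.eq_one_iff]
          exact hw
        obtain ⟨cu, hcu⟩ := hw'
        have hcv : redq O π hm ↑w = (↑cu : O ⧸ Ideal.span {π} ^ 1)^2 := by
          have := congrArg Units.val hcu
          rw [Units.coe_map] at this
          exact this.symm
        obtain ⟨z, hz⟩ := sq_lift O π m hm hπ h2k _ _ cu.ne_zero hcv
        apply hmem
        exact ⟨z, 0, by linear_combination hz⟩
    rw [hker, Subgroup.index_ker, MonoidHom.range_eq_top.2 hφs, Subgroup.card_top,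
      ← Subgroup.index_eq_card]
    exact ff_sq_index h21
end
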